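/- arXiv:1605.00705 — 3 statements merged into one kernel-verified Lean document; each statement's English description precedes it below -/
import Mathlib

section
/- Let P be an irreducible row-stochastic M×M matrix with stationary distribution π. Then the set {θ > 0 : Λ_A(θ,P) < θ·c} is empty (equivalently θ*(P) = 0) if and only if Σ_i π_i·r_i ≥ c. In particular θ*(P) > 0 whenever the stationary mean arrival rate is strictly less than the service rate c. -/
open scoped BigOperators Classical
open Filter

noncomputable section

def IsRowStochastic {M : ℕ} (P : Matrix (Fin M) (Fin M) ℝ) : Prop :=
  (∀ i j, 0 ≤ P i j) ∧ ∀ i, ∑ j, P i j = 1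

def IsIrreducibleMat {M : ℕ} (P : Matrix (Fin M) (Fin M) ℝ) : Prop :=
  ∀ i j, ∃ n : ℕ, 1 ≤ n ∧ 0 < (P ^ n) i j

def IsStationaryDist {M : ℕ} (P : Matrix (Fin M) (Fin M) ℝ) (π : Fin M → ℝ) : Prop :=
  (∀ i, 0 ≤ π i) ∧ (∑ i, π i = 1) ∧ ∀ j, ∑ i, π i * P i j = π j

def PiMat {M : ℕ} (r : Fin M → ℝ) (θ : ℝ) (A : Matrix (Fin M) (Fin M) ℝ) :
    Matrix (Fin M) (Fin M) ℝ :=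
  Matrix.of fun i j => A i j * Real.exp (θ * r j)

def LambdaA {M : ℕ} (r : Fin M → ℝ) (θ : ℝ) (A : Matrix (Fin M) (Fin M) ℝ) : ℝ :=
  Real.log ((spectralRadius ℝ (PiMat r θ A)).toReal)

def thetaStar {M : ℕ} (r : Fin M → ℝ) (c : ℝ) (A : Matrix (Fin M) (Fin M) ℝ) : ℝ :=
  sSup ({0} ∪ {θ : ℝ | 0 < θ ∧ LambdaA r θ A < θ * c})

def q1 {M : ℕ} (q : Fin M → Fin M → ℝ) (i : Fin M) : ℝ := ∑ j, q i j

def qf {M : ℕ} (q : Fin M → Fin M → ℝ) (i j : Fin M) : ℝ := q i j / q1 q i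

def Qf {M : ℕ} (q : Fin M → Fin M → ℝ) : Matrix (Fin M) (Fin M) ℝ :=
  Matrix.of fun i j => qf q i j

def Dset {M : ℕ} (q : Fin M → Fin M → ℝ) : Set (Matrix (Fin M) (Fin M) ℝ) :=
  {p | IsRowStochastic p ∧ ∀ i j, 0 < q i j → 0 < p i j}

def I3hat {M : ℕ} (q : Fin M → Fin M → ℝ) (p : Matrix (Fin M) (Fin M) ℝ) : ℝ :=
  ∑ i, q1 q i * ∑ j ∈ Finset.univ.filter (fun j => 0 < q i j),
    qf q i j * Real.log (qf q i j / p i j)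

def thetaBar {M : ℕ} (r : Fin M → ℝ) (c : ℝ) (q : Fin M → Fin M → ℝ) (l s : ℝ)
    (p : Matrix (Fin M) (Fin M) ℝ) : ℝ :=
  l * s * thetaStar r c p + I3hat q p

def I1set {M : ℕ} (r : Fin M → ℝ) (c : ℝ) : Set (Matrix (Fin M) (Fin M) ℝ) :=
  {P | IsRowStochastic P ∧ IsIrreducibleMat P ∧ ∃ π, IsStationaryDist P π ∧ ∑ i, π i * r i < c}

def I2set {M : ℕ} (r : Fin M → ℝ) (c : ℝ) : Set (Matrix (Fin M) (Fin M) ℝ) :=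
  {P | IsRowStochastic P ∧ IsIrreducibleMat P ∧ ∃ π, IsStationaryDist P π ∧ c < ∑ i, π i * r i}

def I3set {M : ℕ} (r : Fin M → ℝ) (c : ℝ) : Set (Matrix (Fin M) (Fin M) ℝ) :=
  {P | IsRowStochastic P ∧ IsIrreducibleMat P ∧ ∃ π, IsStationaryDist P π ∧ ∑ i, π i * r i = c}

def toMat {M : ℕ} (x : EuclideanSpace ℝ (Fin M × Fin M)) : Matrix (Fin M) (Fin M) ℝ :=
  Matrix.of fun i j => x (i, j)

def toEuc {M : ℕ} (A : Matrix (Fin M) (Fin M) ℝ) : EuclideanSpace ℝ (Fin M × Fin M) :=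
  (WithLp.equiv 2 ((Fin M × Fin M) → ℝ)).symm (fun ij => A ij.1 ij.2)

def frobInner {M : ℕ} (A B : Matrix (Fin M) (Fin M) ℝ) : ℝ := ∑ i, ∑ j, A i j * B i j

namespace Stmt5Aux

open Matrix Finset Topology
open scoped NNReal ENNReal

variable {M : ℕ}

lemma mulVec_apply (A : Matrix (Fin M) (Fin M) ℝ) (v : Fin M → ℝ) (i : Fin M) :
    A.mulVec v i = ∑ j, A i j * v j := by
  simp [Matrix.mulVec, dotProduct]

lemma pow_nonneg_mat {A : Matrix (Fin M) (Fin M) ℝ} (hA : ∀ i j, 0 ≤ A i j) (n : ℕ) :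
    ∀ i j, 0 ≤ (A ^ n) i j := by
  induction n with
  | zero =>
    intro i j
    by_cases h : i = j <;> simp [pow_zero, Matrix.one_apply, h]
  | succ n ih =>
    intro i j
    rw [pow_succ, Matrix.mul_apply]
    exact Finset.sum_nonneg fun k _ => mul_nonneg (ih i k) (hA k j)

lemma pow_dom {A B : Matrix (Fin M) (Fin M) ℝ} {ε : ℝ} (hε : 0 ≤ ε)
    (hB : ∀ i j, 0 ≤ B i j) (hA : ∀ i j, 0 ≤ A i j)
    (hd : ∀ i j, ε * B i j ≤ A i j) (n : ℕ) :
    ∀ i j, ε ^ n * (B ^ n) i j ≤ (A ^ n) i j := by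
  induction n with
  | zero => intro i j; simp
  | succ n ih =>
    intro i j
    have expand : ∀ (C : Matrix (Fin M) (Fin M) ℝ), (C ^ (n+1)) i j = ∑ k, (C ^ n) i k * C k j :=
      fun C => by rw [pow_succ, Matrix.mul_apply]
    rw [expand, expand, Finset.mul_sum]
    refine Finset.sum_le_sum fun k _ => ?_
    have h1 : ε ^ (n + 1) * ((B ^ n) i k * B k j)
        = (ε ^ n * (B ^ n) i k) * (ε * B k j) := by ring
    rw [h1]
    exact mul_le_mul (ih i k) (hd k j) (mul_nonneg hε (hB k j)) (pow_nonneg_mat hA n i k)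

lemma exists_pos_entry {f : Fin M → ℝ} (hf : ∀ j, 0 ≤ f j) (h : 0 < ∑ j, f j) :
    ∃ j, 0 < f j := by
  by_contra hc
  push_neg at hc
  have : ∑ j, f j ≤ 0 := Finset.sum_nonpos fun j _ => hc j
  linarith

lemma one_add_pow_diag_pos {A : Matrix (Fin M) (Fin M) ℝ} (hA : ∀ i j, 0 ≤ A i j) (k : ℕ) :
    ∀ i, 0 < ((1 + A) ^ k) i i := by
  have h1A : ∀ i j, 0 ≤ (1 + A) i j := by
    intro i j
    rcases eq_or_ne i j with h | h
    · subst h; have := hA i i; simp [Matrix.add_apply, Matrix.one_apply]; linarith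
    · simpa [Matrix.add_apply, Matrix.one_apply, h] using hA i j
  induction k with
  | zero => intro i; simp [Matrix.one_apply]
  | succ k ih =>
    intro i
    rw [pow_succ, Matrix.mul_apply]
    refine Finset.sum_pos' (fun l _ => mul_nonneg (pow_nonneg_mat h1A k i l) (h1A l i)) ⟨i, Finset.mem_univ i, ?_⟩
    have : (1 : ℝ) ≤ (1 + A) i i := by simp [Matrix.add_apply, Matrix.one_apply]; linarith [hA i i]
    exact mul_pos (ih i) (by linarith)

lemma one_add_pow_pos {A : Matrix (Fin M) (Fin M) ℝ} (hA : ∀ i j, 0 ≤ A i j) :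
    ∀ n k i j, 0 < (A ^ n) i j → 0 < ((1 + A) ^ (n + k)) i j := by
  have h1A : ∀ i j, 0 ≤ (1 + A) i j := by
    intro i j
    rcases eq_or_ne i j with h | h
    · subst h; have := hA i i; simp [Matrix.add_apply, Matrix.one_apply]; linarith
    · simpa [Matrix.add_apply, Matrix.one_apply, h] using hA i j
  intro n
  induction n with
  | zero =>
    intro k i j h
    have hij : i = j := by
      by_contra hne
      simp [pow_zero, Matrix.one_apply, hne] at h
    subst hij
    simpa using one_add_pow_diag_pos hA k i
  | succ n ih =>
    intro k i j h
    rw [pow_succ, Matrix.mul_apply] at h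
    obtain ⟨l, hl⟩ := exists_pos_entry (f := fun l => (A ^ n) i l * A l j)
      (fun l => mul_nonneg (pow_nonneg_mat hA n i l) (hA l j)) h
    have hAnil : 0 < (A ^ n) i l := by
      rcases lt_or_ge 0 ((A ^ n) i l) with h' | h'
      · exact h'
      · exfalso; nlinarith [hA l j]
    have hAlj : 0 < A l j := by
      rcases lt_or_ge 0 (A l j) with h' | h'
      · exact h'
      · exfalso; nlinarith [pow_nonneg_mat hA n i l]
    have hstep := ih k i l hAnil
    have : n + 1 + k = (n + k) + 1 := by ring
    rw [this, pow_succ, Matrix.mul_apply]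
    refine Finset.sum_pos' (fun m _ => mul_nonneg (pow_nonneg_mat h1A (n+k) i m) (h1A m j))
      ⟨l, Finset.mem_univ l, ?_⟩
    have h1Alj : 0 < (1 + A) l j := by
      by_cases hlj : l = j
      · subst hlj; simp [Matrix.add_apply, Matrix.one_apply]; linarith
      · simpa [Matrix.add_apply, Matrix.one_apply, hlj] using hAlj
    exact mul_pos hstep h1Alj

lemma exists_pos_pow {A : Matrix (Fin M) (Fin M) ℝ} (hA : ∀ i j, 0 ≤ A i j)
    (hirr : IsIrreducibleMat A) : ∃ K : ℕ, ∀ i j, 0 < ((1 + A) ^ K) i j := by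
  choose n hn1 hnpos using hirr
  refine ⟨∑ i, ∑ j, n i j, fun i j => ?_⟩
  have hle : n i j ≤ ∑ i, ∑ j, n i j := by
    calc n i j ≤ ∑ j', n i j' := Finset.single_le_sum (fun _ _ => Nat.zero_le _) (Finset.mem_univ j)
    _ ≤ ∑ i', ∑ j', n i' j' := Finset.single_le_sum (f := fun i' => ∑ j', n i' j')
        (fun _ _ => Nat.zero_le _) (Finset.mem_univ i)
  have := one_add_pow_pos hA (n i j) (∑ i, ∑ j, n i j - n i j) i j (hnpos i j)
  rwa [Nat.add_sub_cancel' hle] at this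

lemma eigen_pow {A : Matrix (Fin M) (Fin M) ℝ} {c : ℝ} {x : Fin M → ℝ}
    (h : A.mulVec x = c • x) (n : ℕ) : (A ^ n).mulVec x = c ^ n • x := by
  induction n with
  | zero => simp [Matrix.one_mulVec]
  | succ n ih =>
    rw [pow_succ', pow_succ', ← Matrix.mulVec_mulVec, ih, Matrix.mulVec_smul, h, smul_smul]
    ring_nf

lemma perron (hM : 0 < M) (A : Matrix (Fin M) (Fin M) ℝ) (hA : ∀ i j, 0 ≤ A i j)
    (hirr : IsIrreducibleMat A) :
    ∃ ρ : ℝ, ∃ v : Fin M → ℝ, 0 ≤ ρ ∧ (∀ i, 0 < v i) ∧ A.mulVec v = ρ • v := by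
  haveI : NeZero M := ⟨hM.ne'⟩
  obtain ⟨K, hK⟩ := exists_pos_pow hA hirr
  set B := (1 + A) ^ K with hB
  set S : Set ℝ := {t | ∃ v ∈ stdSimplex ℝ (Fin M), ∀ i, t * v i ≤ A.mulVec v i} with hS
  have huniform : (fun _ : Fin M => (M : ℝ)⁻¹) ∈ stdSimplex ℝ (Fin M) := by
    constructor
    · intro x; positivity
    · have hMne : (M:ℝ) ≠ 0 := Nat.cast_ne_zero.mpr hM.ne'
      rw [Finset.sum_const, Finset.card_univ, Fintype.card_fin, nsmul_eq_mul, mul_inv_cancel₀ hMne]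
  have hS0 : (0 : ℝ) ∈ S := by
    refine ⟨_, huniform, fun i => ?_⟩
    rw [zero_mul, mulVec_apply]
    exact Finset.sum_nonneg fun j _ => mul_nonneg (hA i j) (by positivity)
  have hSne : S.Nonempty := ⟨0, hS0⟩
  have hSbdd : BddAbove S := by
    refine ⟨∑ i, ∑ j, A i j, fun t ht => ?_⟩
    obtain ⟨v, hv, hineq⟩ := ht
    have h1 : t = ∑ i, t * v i := by rw [← Finset.mul_sum, hv.2, mul_one]
    calc t = ∑ i, t * v i := h1
    _ ≤ ∑ i, A.mulVec v i := Finset.sum_le_sum fun i _ => hineq i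
    _ = ∑ i, ∑ j, A i j * v j := by simp [mulVec_apply]
    _ ≤ ∑ i, ∑ j, A i j := by
        refine Finset.sum_le_sum fun i _ => Finset.sum_le_sum fun j _ => ?_
        have hvj1 : v j ≤ 1 := by
          rw [← hv.2]
          exact Finset.single_le_sum (fun k _ => hv.1 k) (Finset.mem_univ j)
        nlinarith [hA i j, hv.1 j]
  set ρ : ℝ := sSup S with hρ
  have hρ0 : 0 ≤ ρ := le_csSup hSbdd hS0
  -- Step: find v in simplex with ρ • v ≤ A v
  have hseq : ∀ n : ℕ, ∃ v ∈ stdSimplex ℝ (Fin M), ∀ i, (ρ - 1/(n+1)) * v i ≤ A.mulVec v i := by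
    intro n
    have hlt : ρ - 1/(n+1) < ρ := by
      have : (0:ℝ) < 1/(n+1) := by positivity
      linarith
    obtain ⟨t, htS, htgt⟩ := exists_lt_of_lt_csSup hSne hlt
    obtain ⟨v, hv, hineq⟩ := htS
    exact ⟨v, hv, fun i => le_trans (mul_le_mul_of_nonneg_right htgt.le (hv.1 i)) (hineq i)⟩
  choose vs hvs hvineq using hseq
  obtain ⟨x, hxΔ, φ, hφ, hconv⟩ := (isCompact_stdSimplex ℝ (Fin M)).tendsto_subseq hvs
  have hxineq : ∀ i, ρ * x i ≤ A.mulVec x i := by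
    intro i
    have hcoord : ∀ j, Tendsto (fun k => vs (φ k) j) atTop (𝓝 (x j)) := by
      intro j
      exact (tendsto_pi_nhds.mp hconv) j
    have h2 : Tendsto (fun k => A.mulVec (vs (φ k)) i) atTop (𝓝 (A.mulVec x i)) := by
      simp only [mulVec_apply]
      exact tendsto_finset_sum _ fun j _ => (hcoord j).const_mul _
    have h3 : Tendsto (fun k => (ρ - 1/(φ k+1)) * vs (φ k) i) atTop (𝓝 (ρ * x i)) := by
      have h0 : Tendsto (fun k : ℕ => ρ - 1/((φ k:ℝ)+1)) atTop (𝓝 (ρ - 0)) :=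
        Tendsto.sub tendsto_const_nhds
          (tendsto_one_div_add_atTop_nhds_zero_nat.comp hφ.tendsto_atTop)
      rw [sub_zero] at h0
      exact h0.mul (hcoord i)
    exact le_of_tendsto_of_tendsto' h3 h2 fun k => hvineq (φ k) i
  -- Step: equality
  have hBpos : ∀ i j, 0 < B i j := hK
  have hxnonneg := hxΔ.1
  obtain ⟨j0, hj0⟩ : ∃ j, 0 < x j := by
    apply exists_pos_entry hxnonneg
    rw [hxΔ.2]; norm_num
  have hequal : A.mulVec x = ρ • x := by
    by_contra hne
    set u : Fin M → ℝ := fun i => A.mulVec x i - ρ * x i with hu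
    have hunonneg : ∀ i, 0 ≤ u i := fun i => by simp [hu]; linarith [hxineq i]
    obtain ⟨k0, hk0⟩ : ∃ k0, 0 < u k0 := by
      by_contra hc
      push_neg at hc
      apply hne
      funext i
      have h1 : u i = 0 := le_antisymm (hc i) (hunonneg i)
      have : A.mulVec x i - ρ * x i = 0 := h1
      simp [Pi.smul_apply, smul_eq_mul]
      linarith
    set w := B.mulVec x with hw
    have hwpos : ∀ i, 0 < w i := by
      intro i
      rw [hw, mulVec_apply]
      exact Finset.sum_pos' (fun j _ => mul_nonneg (hBpos i j).le (hxnonneg j))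
        ⟨j0, Finset.mem_univ j0, mul_pos (hBpos i j0) hj0⟩
    have hcomm : A * B = B * A := by
      have h1 : Commute A (1 + A) := (Commute.one_right A).add_right (Commute.refl A)
      exact (h1.pow_right K).eq
    have hAx : A.mulVec x = (fun i => ρ * x i) + u := by
      funext i; simp [hu]
    have hAw : A.mulVec w = ρ • w + B.mulVec u := by
      rw [hw, Matrix.mulVec_mulVec, hcomm, ← Matrix.mulVec_mulVec, hAx]
      rw [Matrix.mulVec_add]
      congr 1
      have : (fun i => ρ * x i) = ρ • x := by funext i; simp
      rw [this, Matrix.mulVec_smul]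
    have hBupos : ∀ i, 0 < B.mulVec u i := by
      intro i
      rw [mulVec_apply]
      exact Finset.sum_pos' (fun j _ => mul_nonneg (hBpos i j).le (hunonneg j))
        ⟨k0, Finset.mem_univ k0, mul_pos (hBpos i k0) hk0⟩
    set ε : ℝ := Finset.univ.inf' (Finset.univ_nonempty) (fun i => B.mulVec u i / w i) with hε
    have hεpos : 0 < ε := by
      rw [hε, Finset.lt_inf'_iff]
      exact fun i _ => div_pos (hBupos i) (hwpos i)
    have hεle : ∀ i, ε * w i ≤ B.mulVec u i := by
      intro i
      have := Finset.inf'_le (fun i => B.mulVec u i / w i) (Finset.mem_univ i)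
      rw [← hε] at this
      calc ε * w i ≤ (B.mulVec u i / w i) * w i := by
            exact mul_le_mul_of_nonneg_right this (hwpos i).le
      _ = B.mulVec u i := div_mul_cancel₀ _ (hwpos i).ne'
    set σ : ℝ := ∑ i, w i with hσ
    have hσpos : 0 < σ := Finset.sum_pos (fun i _ => hwpos i) Finset.univ_nonempty
    have hw' : σ⁻¹ • w ∈ stdSimplex ℝ (Fin M) := by
      constructor
      · intro i
        exact mul_nonneg (by positivity) (hwpos i).le
      · simp only [Pi.smul_apply, smul_eq_mul, ← Finset.mul_sum, ← hσ]
        field_simp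
    have hmem : ρ + ε ∈ S := by
      refine ⟨σ⁻¹ • w, hw', fun i => ?_⟩
      have h4 : A.mulVec (σ⁻¹ • w) i = σ⁻¹ * A.mulVec w i := by
        rw [Matrix.mulVec_smul]; simp
      rw [h4]
      have h5 : (ρ + ε) * w i ≤ A.mulVec w i := by
        have := hεle i
        have h6 : A.mulVec w i = ρ * w i + B.mulVec u i := by
          rw [hAw]; simp
        rw [h6]; ring_nf; nlinarith
      have h7 : (0:ℝ) ≤ σ⁻¹ := by positivity
      calc (ρ + ε) * (σ⁻¹ • w) i = σ⁻¹ * ((ρ + ε) * w i) := by simp; ring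
      _ ≤ σ⁻¹ * A.mulVec w i := mul_le_mul_of_nonneg_left h5 h7
    have := le_csSup hSbdd hmem
    rw [← hρ] at this
    linarith
  -- positivity of x
  have h1Ax : (1 + A).mulVec x = (1 + ρ) • x := by
    rw [Matrix.add_mulVec, Matrix.one_mulVec, hequal]
    funext i; simp; ring
  have hBx : B.mulVec x = (1 + ρ) ^ K • x := eigen_pow h1Ax K
  have hxpos : ∀ i, 0 < x i := by
    intro i
    have h8 : 0 < B.mulVec x i := by
      rw [mulVec_apply]
      exact Finset.sum_pos' (fun j _ => mul_nonneg (hBpos i j).le (hxnonneg j))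
        ⟨j0, Finset.mem_univ j0, mul_pos (hBpos i j0) hj0⟩
    rw [hBx] at h8
    simp only [Pi.smul_apply, smul_eq_mul] at h8
    have h9 : (0:ℝ) < (1 + ρ) ^ K := by positivity
    nlinarith [hxnonneg i]
  exact ⟨ρ, x, hρ0, hxpos, hequal⟩

lemma specRadius_le {A : Matrix (Fin M) (Fin M) ℝ} (hA : ∀ i j, 0 ≤ A i j)
    {v : Fin M → ℝ} (hv : ∀ i, 0 < v i) {t : ℝ} (ht : 0 ≤ t)
    (h : ∀ i, A.mulVec v i ≤ t * v i) :
    spectralRadius ℝ A ≤ ENNReal.ofReal t := by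
  rw [spectralRadius]
  refine iSup₂_le fun lam hlam => ?_
  rw [← enorm_eq_nnnorm, ← ofReal_norm]
  refine ENNReal.ofReal_le_ofReal ?_
  -- extract eigenvector
  have hdet : (Matrix.det (algebraMap ℝ (Matrix (Fin M) (Fin M) ℝ) lam - A)) = 0 := by
    by_contra hd
    exact (spectrum.mem_iff.mp hlam) ((Matrix.isUnit_iff_isUnit_det _).mpr (isUnit_iff_ne_zero.mpr hd))
  obtain ⟨x, hx0, hxe⟩ := (Matrix.exists_mulVec_eq_zero_iff).mpr hdet
  have heig : A.mulVec x = lam • x := by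
    have h1 : (algebraMap ℝ (Matrix (Fin M) (Fin M) ℝ) lam - A).mulVec x
        = lam • x - A.mulVec x := by
      rw [Matrix.sub_mulVec, Algebra.algebraMap_eq_smul_one, Matrix.smul_mulVec,
        Matrix.one_mulVec]
    rw [h1] at hxe
    have := sub_eq_zero.mp hxe
    exact this.symm
  -- Fin M is nonempty since x ≠ 0
  have hMpos : Nonempty (Fin M) := by
    by_contra hc
    exact hx0 (funext fun i => absurd ⟨i⟩ hc)
  have hne : (Finset.univ : Finset (Fin M)).Nonempty := Finset.univ_nonempty
  obtain ⟨i0, _, hi0max⟩ := Finset.exists_max_image Finset.univ (fun i => |x i| / v i) hne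
  set β := |x i0| / v i0 with hβ
  have hβpos : 0 < β := by
    obtain ⟨i1, hi1⟩ : ∃ i, x i ≠ 0 := by
      by_contra hc
      push_neg at hc
      exact hx0 (funext hc)
    have h2 : 0 < |x i1| / v i1 := div_pos (abs_pos.mpr hi1) (hv i1)
    exact lt_of_lt_of_le h2 (hi0max i1 (Finset.mem_univ i1))
  have hxb : ∀ j, |x j| ≤ β * v j := by
    intro j
    have := hi0max j (Finset.mem_univ j)
    calc |x j| = (|x j| / v j) * v j := (div_mul_cancel₀ _ (hv j).ne').symm
    _ ≤ β * v j := mul_le_mul_of_nonneg_right this (hv j).le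
  have hxi0 : |x i0| = β * v i0 := by
    rw [hβ, div_mul_cancel₀ _ (hv i0).ne']
  have hmain : |lam| * (β * v i0) ≤ t * (β * v i0) := by
    calc |lam| * (β * v i0) = |lam| * |x i0| := by rw [hxi0]
    _ = |lam * x i0| := (abs_mul _ _).symm
    _ = |(A.mulVec x) i0| := by rw [heig]; simp
    _ = |∑ j, A i0 j * x j| := by rw [mulVec_apply]
    _ ≤ ∑ j, |A i0 j * x j| := Finset.abs_sum_le_sum_abs _ _
    _ = ∑ j, A i0 j * |x j| := by
        refine Finset.sum_congr rfl fun j _ => ?_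
        rw [abs_mul, abs_of_nonneg (hA i0 j)]
    _ ≤ ∑ j, A i0 j * (β * v j) := Finset.sum_le_sum fun j _ =>
        mul_le_mul_of_nonneg_left (hxb j) (hA i0 j)
    _ = β * ∑ j, A i0 j * v j := by rw [Finset.mul_sum]; exact Finset.sum_congr rfl fun j _ => by ring
    _ = β * A.mulVec v i0 := by rw [mulVec_apply]
    _ ≤ β * (t * v i0) := mul_le_mul_of_nonneg_left (h i0) hβpos.le
    _ = t * (β * v i0) := by ring
  have hβv : 0 < β * v i0 := mul_pos hβpos (hv i0)
  have := le_of_mul_le_mul_right (by linarith [hmain] : |lam| * (β * v i0) ≤ t * (β * v i0)) hβv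
  simpa [Real.norm_eq_abs] using this

lemma specRadius_toReal_eq (hM : 0 < M) {A : Matrix (Fin M) (Fin M) ℝ} (hA : ∀ i j, 0 ≤ A i j)
    {ρ : ℝ} {v : Fin M → ℝ} (hρ : 0 ≤ ρ) (hv : ∀ i, 0 < v i)
    (heq : A.mulVec v = ρ • v) :
    (spectralRadius ℝ A).toReal = ρ := by
  have hub : spectralRadius ℝ A ≤ ENNReal.ofReal ρ := by
    refine specRadius_le hA hv hρ fun i => ?_
    rw [heq]; simp
  have hmem : ρ ∈ spectrum ℝ A := by
    rw [spectrum.mem_iff]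
    intro hunit
    rw [Matrix.isUnit_iff_isUnit_det, isUnit_iff_ne_zero] at hunit
    apply hunit
    rw [← Matrix.exists_mulVec_eq_zero_iff]
    refine ⟨v, ?_, ?_⟩
    · intro hc
      have h0 := hv ⟨0, hM⟩
      rw [hc] at h0
      simp at h0
    · rw [Matrix.sub_mulVec, Algebra.algebraMap_eq_smul_one, Matrix.smul_mulVec,
        Matrix.one_mulVec, heq, sub_self]
  have hlow : ENNReal.ofReal ρ ≤ spectralRadius ℝ A := by
    have h1 : ((‖ρ‖₊ : ℝ≥0) : ℝ≥0∞) ≤ spectralRadius ℝ A := by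
      rw [spectralRadius]
      exact le_iSup₂ (f := fun (k:ℝ) (_ : k ∈ spectrum ℝ A) => ((‖k‖₊ : ℝ≥0) : ℝ≥0∞)) ρ hmem
    rwa [← enorm_eq_nnnorm, ← ofReal_norm, Real.norm_eq_abs, abs_of_nonneg hρ] at h1
  have hne_top : spectralRadius ℝ A ≠ ⊤ := ne_top_of_le_ne_top ENNReal.ofReal_ne_top hub
  refine le_antisymm ?_ ?_
  · have := ENNReal.toReal_mono ENNReal.ofReal_ne_top hub
    rwa [ENNReal.toReal_ofReal hρ] at this
  · have := ENNReal.toReal_mono hne_top hlow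
    rwa [ENNReal.toReal_ofReal hρ] at this



variable {M : ℕ}

lemma PiMat_apply (r : Fin M → ℝ) (θ : ℝ) (P : Matrix (Fin M) (Fin M) ℝ) (i j : Fin M) :
    PiMat r θ P i j = P i j * Real.exp (θ * r j) := rfl

lemma PiMat_nonneg {P : Matrix (Fin M) (Fin M) ℝ} (hP : ∀ i j, 0 ≤ P i j)
    (r : Fin M → ℝ) (θ : ℝ) : ∀ i j, 0 ≤ PiMat r θ P i j :=
  fun i j => mul_nonneg (hP i j) (Real.exp_pos _).le

lemma PiMat_irr {P : Matrix (Fin M) (Fin M) ℝ} (hP : ∀ i j, 0 ≤ P i j)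
    (hPi : IsIrreducibleMat P) (r : Fin M → ℝ) (θ : ℝ) :
    IsIrreducibleMat (PiMat r θ P) := by
  intro i j
  obtain ⟨n, hn1, hnpos⟩ := hPi i j
  refine ⟨n, hn1, ?_⟩
  haveI : Nonempty (Fin M) := ⟨i⟩
  set ε : ℝ := Finset.univ.inf' Finset.univ_nonempty (fun k => Real.exp (θ * r k)) with hε
  have hεpos : 0 < ε := by
    rw [hε, Finset.lt_inf'_iff]
    exact fun k _ => Real.exp_pos _
  have hdom : ∀ a b, ε * P a b ≤ PiMat r θ P a b := by
    intro a b
    rw [PiMat_apply, mul_comm (P a b)]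
    exact mul_le_mul_of_nonneg_right (Finset.inf'_le _ (Finset.mem_univ b)) (hP a b)
  have := pow_dom hεpos.le hP (PiMat_nonneg hP r θ) hdom n i j
  have hεn : 0 < ε ^ n := pow_pos hεpos n
  nlinarith

lemma pow_row_sum {P : Matrix (Fin M) (Fin M) ℝ} (hPs : IsRowStochastic P) (n : ℕ) :
    ∀ i, ∑ j, (P ^ n) i j = 1 := by
  induction n with
  | zero => intro i; simp [Matrix.one_apply]
  | succ n ih =>
    intro i
    have : ∀ j, (P ^ (n+1)) i j = ∑ k, (P ^ n) i k * P k j := by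
      intro j; rw [pow_succ, Matrix.mul_apply]
    simp only [this]
    rw [Finset.sum_comm]
    calc ∑ k, ∑ j, (P ^ n) i k * P k j = ∑ k, (P ^ n) i k * ∑ j, P k j := by
          simp [Finset.mul_sum]
    _ = ∑ k, (P ^ n) i k := by simp [hPs.2]
    _ = 1 := ih i

lemma lambda_lower (hM : 0 < M) (r : Fin M → ℝ) (θ : ℝ)
    {P : Matrix (Fin M) (Fin M) ℝ} (hPs : IsRowStochastic P) (hPi : IsIrreducibleMat P)
    {π : Fin M → ℝ} (hπ : IsStationaryDist P π) :
    θ * (∑ i, π i * r i) ≤ LambdaA r θ P := by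
  obtain ⟨ρ, v, hρ0, hv, heq⟩ := perron hM (PiMat r θ P) (PiMat_nonneg hPs.1 r θ)
    (PiMat_irr hPs.1 hPi r θ)
  have hsr : (spectralRadius ℝ (PiMat r θ P)).toReal = ρ :=
    specRadius_toReal_eq hM (PiMat_nonneg hPs.1 r θ) hρ0 hv heq
  -- ρ > 0
  have hρpos : 0 < ρ := by
    have i0 : Fin M := ⟨0, hM⟩
    obtain ⟨j1, hj1⟩ : ∃ j, 0 < P i0 j := by
      apply exists_pos_entry (fun j => hPs.1 i0 j)
      rw [hPs.2 i0]; norm_num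
    have h1 : 0 < (PiMat r θ P).mulVec v i0 := by
      rw [mulVec_apply]
      refine Finset.sum_pos' (fun j _ => mul_nonneg (PiMat_nonneg hPs.1 r θ i0 j) (hv j).le)
        ⟨j1, Finset.mem_univ j1, ?_⟩
      exact mul_pos (mul_pos hj1 (Real.exp_pos _)) (hv j1)
    rw [heq] at h1
    simp only [Pi.smul_apply, smul_eq_mul] at h1
    nlinarith [hv i0]
  -- Jensen per row
  have hrow : ∀ i, Real.log ρ + Real.log (v i) ≥
      ∑ j, P i j * (θ * r j + Real.log (v j)) := by
    intro i
    have hjensen := ConcaveOn.le_map_sum (strictConcaveOn_log_Ioi.concaveOn)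
      (t := Finset.univ) (w := fun j => P i j) (p := fun j => Real.exp (θ * r j) * v j)
      (fun j _ => hPs.1 i j) (hPs.2 i)
      (fun j _ => Set.mem_Ioi.mpr (mul_pos (Real.exp_pos _) (hv j)))
    have hsum : ∑ j, P i j • (Real.exp (θ * r j) * v j) = (PiMat r θ P).mulVec v i := by
      rw [mulVec_apply]
      refine Finset.sum_congr rfl fun j _ => ?_
      simp [PiMat_apply]; ring
    rw [hsum, heq] at hjensen
    have hlog : Real.log ((ρ • v) i) = Real.log ρ + Real.log (v i) := by
      simp only [Pi.smul_apply, smul_eq_mul]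
      rw [Real.log_mul hρpos.ne' (hv i).ne']
    rw [hlog] at hjensen
    refine le_trans (le_of_eq ?_) hjensen
    refine Finset.sum_congr rfl fun j _ => ?_
    rw [smul_eq_mul, Real.log_mul (Real.exp_pos _).ne' (hv j).ne', Real.log_exp]
  -- aggregate with π
  have hπ1 := hπ.2.1
  have hπst := hπ.2.2
  have hπ0 := hπ.1
  have hagg : ∑ i, π i * (Real.log ρ + Real.log (v i)) ≥
      ∑ i, π i * ∑ j, P i j * (θ * r j + Real.log (v j)) :=
    Finset.sum_le_sum fun i _ => mul_le_mul_of_nonneg_left (hrow i) (hπ0 i)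
  have hLHS : ∑ i, π i * (Real.log ρ + Real.log (v i))
      = Real.log ρ + ∑ i, π i * Real.log (v i) := by
    rw [Finset.sum_congr rfl (fun i _ => mul_add (π i) _ _), Finset.sum_add_distrib,
      ← Finset.sum_mul, hπ1, one_mul]
  have hRHS : ∑ i, π i * ∑ j, P i j * (θ * r j + Real.log (v j))
      = θ * (∑ j, π j * r j) + ∑ j, π j * Real.log (v j) := by
    have h1 : ∀ i, π i * ∑ j, P i j * (θ * r j + Real.log (v j))
        = ∑ j, π i * P i j * (θ * r j + Real.log (v j)) := by
      intro i; rw [Finset.mul_sum]; exact Finset.sum_congr rfl fun j _ => by ring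
    simp only [h1]
    rw [Finset.sum_comm]
    have h2 : ∀ j, ∑ i, π i * P i j * (θ * r j + Real.log (v j))
        = π j * (θ * r j + Real.log (v j)) := by
      intro j
      rw [← Finset.sum_mul, hπst j]
    simp only [h2]
    rw [Finset.sum_congr rfl (fun j _ => mul_add (π j) _ _), Finset.sum_add_distrib]
    congr 1
    rw [Finset.mul_sum]
    exact Finset.sum_congr rfl fun j _ => by ring
  rw [hLHS] at hagg
  rw [hRHS] at hagg
  have : θ * (∑ j, π j * r j) ≤ Real.log ρ := by linarith
  rw [LambdaA, hsr]
  exact this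

lemma poisson (hM : 0 < M) {P : Matrix (Fin M) (Fin M) ℝ} (hPs : IsRowStochastic P)
    (hPi : IsIrreducibleMat P) {π : Fin M → ℝ} (hπ : IsStationaryDist P π)
    (g : Fin M → ℝ) (hg : ∑ i, π i * g i = 0) :
    ∃ h : Fin M → ℝ, ∀ i, h i - P.mulVec h i = g i := by
  haveI : Nonempty (Fin M) := ⟨⟨0, hM⟩⟩
  set f : (Fin M → ℝ) →ₗ[ℝ] (Fin M → ℝ) := LinearMap.id - Matrix.mulVecLin P with hf
  set one : Fin M → ℝ := fun _ => 1 with hone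
  have hone_ne : one ≠ 0 := by
    intro hc
    have := congr_fun hc ⟨0, hM⟩
    simp [hone] at this
  -- kernel of f is span of one
  have hker : LinearMap.ker f = Submodule.span ℝ {one} := by
    apply le_antisymm
    · intro h hh
      have hfix : P.mulVec h = h := by
        have := LinearMap.mem_ker.mp hh
        rw [hf] at this
        simp only [LinearMap.sub_apply, LinearMap.id_apply, Matrix.mulVecLin_apply] at this
        funext i
        have := congr_fun this i
        simp at this
        linarith [this]
      have hpowfix : ∀ n, (P ^ n).mulVec h = h := by
        intro n
        induction n with
        | zero => simp [Matrix.one_mulVec]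
        | succ n ih => rw [pow_succ', ← Matrix.mulVec_mulVec, ih, hfix]
      obtain ⟨i0, _, hi0⟩ := Finset.exists_max_image Finset.univ h Finset.univ_nonempty
      have hconst : ∀ j, h j = h i0 := by
        intro j
        obtain ⟨n, hn1, hnpos⟩ := hPi i0 j
        have hfix_n := congr_fun (hpowfix n) i0
        rw [mulVec_apply] at hfix_n
        have hsum1 : ∑ k, (P ^ n) i0 k = 1 := pow_row_sum hPs n i0
        have hzero : ∑ k, (P ^ n) i0 k * (h i0 - h k) = 0 := by
          rw [Finset.sum_congr rfl (fun k _ => mul_sub ((P ^ n) i0 k) (h i0) (h k)),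
            Finset.sum_sub_distrib, ← Finset.sum_mul, hsum1, one_mul, hfix_n, sub_self]
        have hterms := (Finset.sum_eq_zero_iff_of_nonneg (fun k _ =>
          mul_nonneg (pow_nonneg_mat hPs.1 n i0 k) (by linarith [hi0 k (Finset.mem_univ k)]))).mp hzero
        have := hterms j (Finset.mem_univ j)
        have hj := hi0 j (Finset.mem_univ j)
        nlinarith
      have : h = h i0 • one := by
        funext j; simp [hone, hconst j]
      rw [this]
      exact Submodule.smul_mem _ _ (Submodule.mem_span_singleton_self one)
    · rw [Submodule.span_le, Set.singleton_subset_iff]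
      rw [SetLike.mem_coe, LinearMap.mem_ker, hf]
      simp only [LinearMap.sub_apply, LinearMap.id_apply, Matrix.mulVecLin_apply]
      funext i
      rw [Pi.sub_apply, mulVec_apply]
      simp [hone, hPs.2 i]
  -- functional φ
  set φ : (Fin M → ℝ) →ₗ[ℝ] ℝ :=
    { toFun := fun h => ∑ i, π i * h i
      map_add' := by
        intro a b
        simp [mul_add, Finset.sum_add_distrib]
      map_smul' := by
        intro c a
        simp [Finset.mul_sum]
        exact Finset.sum_congr rfl fun i _ => by ring } with hφ
  have hφone : φ one = 1 := by simp [hφ, hone, hπ.2.1]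
  have hφsurj : LinearMap.range φ = ⊤ := by
    rw [LinearMap.range_eq_top]
    intro a
    exact ⟨a • one, by rw [_root_.map_smul, hφone]; simp⟩
  have hfrk : Module.finrank ℝ (LinearMap.range f) = M - 1 := by
    have hrn := LinearMap.finrank_range_add_finrank_ker f
    rw [hker, finrank_span_singleton hone_ne] at hrn
    have hdim : Module.finrank ℝ (Fin M → ℝ) = M := by
      simp [Module.finrank_fin_fun]
    omega
  have hφrk : Module.finrank ℝ (LinearMap.ker φ) = M - 1 := by
    have hrn := LinearMap.finrank_range_add_finrank_ker φ
    rw [hφsurj] at hrn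
    have hdim : Module.finrank ℝ (Fin M → ℝ) = M := by
      simp [Module.finrank_fin_fun]
    have : Module.finrank ℝ (⊤ : Submodule ℝ ℝ) = 1 := by
      simp [finrank_top]
    omega
  have hle : LinearMap.range f ≤ LinearMap.ker φ := by
    rintro _ ⟨h, rfl⟩
    rw [LinearMap.mem_ker, hf]
    simp only [LinearMap.sub_apply, LinearMap.id_apply, Matrix.mulVecLin_apply]
    show ∑ i, π i * (h i - P.mulVec h i) = 0
    rw [Finset.sum_congr rfl (fun i _ => mul_sub (π i) (h i) (P.mulVec h i)),
      Finset.sum_sub_distrib]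
    have h1 : ∑ i, π i * P.mulVec h i = ∑ i, π i * h i := by
      calc ∑ i, π i * P.mulVec h i = ∑ i, ∑ j, π i * P i j * h j := by
            refine Finset.sum_congr rfl fun i _ => ?_
            rw [mulVec_apply, Finset.mul_sum]
            exact Finset.sum_congr rfl fun j _ => by ring
      _ = ∑ j, ∑ i, π i * P i j * h j := Finset.sum_comm
      _ = ∑ j, π j * h j := by
            refine Finset.sum_congr rfl fun j _ => ?_
            rw [← Finset.sum_mul, hπ.2.2 j]
    rw [h1, sub_self]
  have heq : LinearMap.range f = LinearMap.ker φ := by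
    apply Submodule.eq_of_le_of_finrank_eq hle
    rw [hfrk, hφrk]
  have hgmem : g ∈ LinearMap.ker φ := by
    rw [LinearMap.mem_ker]
    exact hg
  rw [← heq] at hgmem
  obtain ⟨h, hh⟩ := hgmem
  refine ⟨h, fun i => ?_⟩
  have := congr_fun hh i
  rw [hf] at this
  simpa using this

lemma exp_quad {y : ℝ} (hy : |y| ≤ 1) : Real.exp y ≤ 1 + y + y ^ 2 := by
  have h := Real.exp_bound hy (n := 2) (by norm_num)
  simp [Finset.sum_range_succ] at h
  have h2 := abs_le.mp h
  nlinarith [h2.2, sq_nonneg y]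

lemma lambda_upper (hM : 0 < M) (r : Fin M → ℝ) (c : ℝ) (hc : 0 < c)
    {P : Matrix (Fin M) (Fin M) ℝ} (hPs : IsRowStochastic P) (hPi : IsIrreducibleMat P)
    {π : Fin M → ℝ} (hπ : IsStationaryDist P π) (hmc : ∑ i, π i * r i < c) :
    ∃ θ : ℝ, 0 < θ ∧ LambdaA r θ P < θ * c := by
  haveI : Nonempty (Fin M) := ⟨⟨0, hM⟩⟩
  set m : ℝ := ∑ i, π i * r i with hm
  have hswap : ∀ w : Fin M → ℝ, ∑ i, π i * P.mulVec w i = ∑ j, π j * w j := by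
    intro w
    calc ∑ i, π i * P.mulVec w i = ∑ i, ∑ j, π i * P i j * w j := by
          refine Finset.sum_congr rfl fun i _ => ?_
          rw [mulVec_apply, Finset.mul_sum]
          exact Finset.sum_congr rfl fun j _ => by ring
    _ = ∑ j, ∑ i, π i * P i j * w j := Finset.sum_comm
    _ = ∑ j, π j * w j := by
          refine Finset.sum_congr rfl fun j _ => ?_
          rw [← Finset.sum_mul, hπ.2.2 j]
  set g : Fin M → ℝ := fun i => P.mulVec r i - m with hg
  have hgsum : ∑ i, π i * g i = 0 := by
    rw [hg]
    simp only [mul_sub]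
    rw [Finset.sum_sub_distrib, hswap r, ← Finset.sum_mul, hπ.2.1, one_mul, ← hm, sub_self]
  obtain ⟨h, hh⟩ := poisson hM hPs hPi hπ g hgsum
  set u : Fin M → ℝ := fun j => r j + h j with hu
  have hkey : ∀ i, ∑ j, P i j * u j = m + h i := by
    intro i
    have h1 : ∑ j, P i j * u j = P.mulVec r i + P.mulVec h i := by
      rw [mulVec_apply, mulVec_apply, ← Finset.sum_add_distrib]
      exact Finset.sum_congr rfl fun j _ => by rw [hu]; ring
    have h2 : P.mulVec h i = h i - g i := by linarith [hh i]
    have h3 : P.mulVec r i = g i + m := by rw [hg]; ring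
    rw [h1, h2, h3]; ring
  set C : ℝ := ∑ j, |u j| with hCdef
  have hCu : ∀ j, |u j| ≤ C :=
    fun j => Finset.single_le_sum (fun k _ => abs_nonneg (u k)) (Finset.mem_univ j)
  have hC0 : 0 ≤ C := Finset.sum_nonneg fun j _ => abs_nonneg _
  set B0 : ℝ := C + 1 with hB0def
  have hB0 : 1 ≤ B0 := by rw [hB0def]; linarith
  have hB0pos : 0 < B0 := by linarith
  have huB : ∀ j, |u j| ≤ B0 := fun j => by rw [hB0def]; linarith [hCu j]
  have hmhB : ∀ i, |m + h i| ≤ B0 := by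
    intro i
    rw [← hkey i]
    calc |∑ j, P i j * u j| ≤ ∑ j, |P i j * u j| := Finset.abs_sum_le_sum_abs _ _
    _ = ∑ j, P i j * |u j| := Finset.sum_congr rfl fun j _ => by
          rw [abs_mul, abs_of_nonneg (hPs.1 i j)]
    _ ≤ ∑ j, P i j * B0 := Finset.sum_le_sum fun j _ =>
          mul_le_mul_of_nonneg_left (huB j) (hPs.1 i j)
    _ = B0 := by rw [← Finset.sum_mul, hPs.2 i, one_mul]
  set θ : ℝ := min (1/(2*B0)) ((c - m)/(4*B0^2+1)) with hθdef
  have hθpos : 0 < θ := by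
    rw [hθdef]
    apply lt_min
    · positivity
    · apply div_pos (by linarith) (by positivity)
  have hθB : 2*B0*θ ≤ 1 := by
    have h1 : θ ≤ 1/(2*B0) := min_le_left _ _
    rw [div_eq_mul_inv, one_mul] at h1
    calc 2*B0*θ ≤ 2*B0*(2*B0)⁻¹ := by
          apply mul_le_mul_of_nonneg_left h1 (by positivity)
    _ = 1 := by field_simp
  have hθ2 : θ * (4*B0^2+1) ≤ c - m := by
    have h1 : θ ≤ (c - m)/(4*B0^2+1) := min_le_right _ _
    rw [le_div_iff₀ (by positivity)] at h1
    exact h1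
  set v : Fin M → ℝ := fun i => Real.exp (θ * h i) with hv
  have hvpos : ∀ i, 0 < v i := fun i => Real.exp_pos _
  set t : ℝ := Real.exp (θ*m + 4*B0^2*θ^2) with ht
  have hcw : ∀ i, (PiMat r θ P).mulVec v i ≤ t * v i := by
    intro i
    set μ : ℝ := θ * (m + h i) with hμ
    have hexp : ∀ j, PiMat r θ P i j * v j = P i j * Real.exp (θ * u j) := by
      intro j
      rw [PiMat_apply, hv, hu]
      rw [mul_assoc, ← Real.exp_add]
      ring_nf
    have hyabs : ∀ j, |θ * u j - μ| ≤ 2*B0*θ := by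
      intro j
      rw [hμ]
      calc |θ * u j - θ * (m + h i)| ≤ |θ * u j| + |θ * (m + h i)| := abs_sub _ _
      _ = θ * |u j| + θ * |m + h i| := by
            rw [abs_mul, abs_mul, abs_of_nonneg hθpos.le]
      _ ≤ θ * B0 + θ * B0 := by
            have := mul_le_mul_of_nonneg_left (huB j) hθpos.le
            have := mul_le_mul_of_nonneg_left (hmhB i) hθpos.le
            linarith
      _ = 2*B0*θ := by ring
    have hy1 : ∀ j, |θ * u j - μ| ≤ 1 := fun j => le_trans (hyabs j) hθB
    have hy0 : ∑ j, P i j * (θ * u j - μ) = 0 := by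
      rw [Finset.sum_congr rfl (fun j _ => mul_sub (P i j) (θ * u j) μ),
        Finset.sum_sub_distrib, ← Finset.sum_mul, hPs.2 i, one_mul]
      have : ∑ j, P i j * (θ * u j) = θ * ∑ j, P i j * u j := by
        rw [Finset.mul_sum]
        exact Finset.sum_congr rfl fun j _ => by ring
      rw [this, hkey i, hμ, sub_self]
    have hsq : ∀ j, (θ * u j - μ)^2 ≤ 4*B0^2*θ^2 := by
      intro j
      have h1 := hyabs j
      have h2 : (θ * u j - μ)^2 ≤ (2*B0*θ)^2 := by
        rw [← sq_abs]
        apply pow_le_pow_left₀ (abs_nonneg _) h1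
      calc (θ * u j - μ)^2 ≤ (2*B0*θ)^2 := h2
      _ = 4*B0^2*θ^2 := by ring
    calc (PiMat r θ P).mulVec v i = ∑ j, P i j * Real.exp (θ * u j) := by
          rw [mulVec_apply]
          exact Finset.sum_congr rfl fun j _ => hexp j
    _ = Real.exp μ * ∑ j, P i j * Real.exp (θ * u j - μ) := by
          rw [Finset.mul_sum]
          refine Finset.sum_congr rfl fun j _ => ?_
          have hsplit : Real.exp (θ * u j) = Real.exp μ * Real.exp (θ * u j - μ) := by
            rw [← Real.exp_add]
            ring_nf
          rw [hsplit]
          ring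
    _ ≤ Real.exp μ * ∑ j, P i j * (1 + (θ * u j - μ) + (θ * u j - μ)^2) := by
          apply mul_le_mul_of_nonneg_left _ (Real.exp_pos μ).le
          exact Finset.sum_le_sum fun j _ =>
            mul_le_mul_of_nonneg_left (exp_quad (hy1 j)) (hPs.1 i j)
    _ ≤ Real.exp μ * (1 + 4*B0^2*θ^2) := by
          apply mul_le_mul_of_nonneg_left _ (Real.exp_pos μ).le
          have hexpand : ∑ j, P i j * (1 + (θ * u j - μ) + (θ * u j - μ)^2)
              = 1 + ∑ j, P i j * (θ * u j - μ)^2 := by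
            rw [Finset.sum_congr rfl (fun j _ => by ring :
              ∀ j ∈ Finset.univ, P i j * (1 + (θ * u j - μ) + (θ * u j - μ)^2)
                = P i j + P i j * (θ * u j - μ) + P i j * (θ * u j - μ)^2)]
            rw [Finset.sum_add_distrib, Finset.sum_add_distrib, hPs.2 i, hy0]
            ring
          rw [hexpand]
          have : ∑ j, P i j * (θ * u j - μ)^2 ≤ 4*B0^2*θ^2 := by
            calc ∑ j, P i j * (θ * u j - μ)^2 ≤ ∑ j, P i j * (4*B0^2*θ^2) :=
                  Finset.sum_le_sum fun j _ =>
                    mul_le_mul_of_nonneg_left (hsq j) (hPs.1 i j)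
            _ = 4*B0^2*θ^2 := by rw [← Finset.sum_mul, hPs.2 i, one_mul]
          linarith
    _ ≤ Real.exp μ * Real.exp (4*B0^2*θ^2) := by
          apply mul_le_mul_of_nonneg_left _ (Real.exp_pos μ).le
          have := Real.add_one_le_exp (4*B0^2*θ^2)
          linarith
    _ = t * v i := by
          rw [ht, hv, ← Real.exp_add, ← Real.exp_add, hμ]
          ring_nf
  have hsr := specRadius_le (PiMat_nonneg hPs.1 r θ) hvpos (Real.exp_pos _).le hcw
  have hsrR : (spectralRadius ℝ (PiMat r θ P)).toReal ≤ t :=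
    ENNReal.toReal_le_of_le_ofReal (Real.exp_pos _).le hsr
  refine ⟨θ, hθpos, ?_⟩
  have hfinal : θ*m + 4*B0^2*θ^2 < θ * c := by
    nlinarith [hθ2, hθpos, sq_nonneg θ, sq_nonneg B0]
  rw [LambdaA]
  rcases le_or_gt (spectralRadius ℝ (PiMat r θ P)).toReal 0 with h0 | h0
  · have : (spectralRadius ℝ (PiMat r θ P)).toReal = 0 :=
      le_antisymm h0 ENNReal.toReal_nonneg
    rw [this, Real.log_zero]
    positivity
  · calc Real.log ((spectralRadius ℝ (PiMat r θ P)).toReal) ≤ Real.log t :=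
          Real.log_le_log h0 hsrR
    _ = θ*m + 4*B0^2*θ^2 := by rw [ht, Real.log_exp]
    _ < θ * c := hfinal

end Stmt5Aux

theorem stmt5 (M : ℕ) (hM : 2 ≤ M) (r : Fin M → ℝ) (hr : ∀ j, 0 ≤ r j)
    (c : ℝ) (hc : 0 < c)
    (P : Matrix (Fin M) (Fin M) ℝ)
    (hPs : IsRowStochastic P) (hPi : IsIrreducibleMat P)
    (π : Fin M → ℝ) (hπ : IsStationaryDist P π)
    (hbdd : BddAbove {θ : ℝ | 0 < θ ∧ LambdaA r θ P < θ * c}) :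
    ({θ : ℝ | 0 < θ ∧ LambdaA r θ P < θ * c} = ∅ ↔ c ≤ ∑ i, π i * r i) ∧
    (thetaStar r c P = 0 ↔ c ≤ ∑ i, π i * r i) ∧
    (∑ i, π i * r i < c → 0 < thetaStar r c P) := by
  have hM0 : 0 < M := by omega
  have key1 : {θ : ℝ | 0 < θ ∧ LambdaA r θ P < θ * c} = ∅ ↔ c ≤ ∑ i, π i * r i := by
    constructor
    · intro hemp
      by_contra hlt
      push_neg at hlt
      obtain ⟨θ, hθpos, hθlt⟩ := Stmt5Aux.lambda_upper hM0 r c hc hPs hPi hπ hlt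
      have hmem : θ ∈ {θ : ℝ | 0 < θ ∧ LambdaA r θ P < θ * c} := ⟨hθpos, hθlt⟩
      rw [hemp] at hmem
      exact hmem
    · intro hcm
      rw [Set.eq_empty_iff_forall_notMem]
      rintro θ ⟨hθpos, hθlt⟩
      have hlow := Stmt5Aux.lambda_lower hM0 r θ hPs hPi hπ
      have h2 : θ * c ≤ θ * (∑ i, π i * r i) := mul_le_mul_of_nonneg_left hcm hθpos.le
      linarith
  have hbdd' : BddAbove ({0} ∪ {θ : ℝ | 0 < θ ∧ LambdaA r θ P < θ * c}) :=
    BddAbove.union bddAbove_singleton hbdd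
  have key2 : (∑ i, π i * r i) < c → 0 < thetaStar r c P := by
    intro hlt
    obtain ⟨θ, hθpos, hθlt⟩ := Stmt5Aux.lambda_upper hM0 r c hc hPs hPi hπ hlt
    have hle : θ ≤ thetaStar r c P :=
      le_csSup hbdd' (Or.inr ⟨hθpos, hθlt⟩)
    linarith
  refine ⟨key1, ⟨?_, ?_⟩, key2⟩
  · intro h0
    by_contra hlt
    push_neg at hlt
    have := key2 hlt
    rw [h0] at this
    exact lt_irrefl 0 this
  · intro hcm
    have hTemp := key1.mpr hcm
    rw [thetaStar, hTemp, Set.union_empty, csSup_singleton]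
end
end

section
/- Let P be an M×M matrix with nonnegative entries. Then the limiting log-moment generating function θ ↦ Λ_A(θ,P) = log ρ(Π_{θ,P}) is a convex function of θ on ℝ. -/
open scoped BigOperators Classical
open Filter

noncomputable section

namespace Stmt7Aux

open Filter Matrix Topology
open scoped ENNReal NNReal

section
attribute [local instance] Matrix.linftyOpNormedRing Matrix.linftyOpNormedAlgebra

variable {M : ℕ}

abbrev MatR (M : ℕ) := Matrix (Fin M) (Fin M) ℝ

def cmap (A : MatR M) : Matrix (Fin M) (Fin M) ℂ := Complex.ofRealHom.mapMatrix A

lemma cmap_apply (A : MatR M) (i j : Fin M) : cmap A i j = (A i j : ℂ) := rfl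

lemma cmap_pow (A : MatR M) (n : ℕ) : cmap (A ^ n) = cmap A ^ n := map_pow _ _ _


def rhoC (A : MatR M) : ℝ := (spectralRadius ℂ (cmap A)).toReal

lemma rhoC_nonneg (A : MatR M) : 0 ≤ rhoC A := ENNReal.toReal_nonneg

lemma specC_ne_top (A : MatR M) : spectralRadius ℂ (cmap A) ≠ ⊤ := by
  have h := spectrum.spectralRadius_le_pow_nnnorm_pow_one_div ℂ (cmap A) 0
  simp only [pow_one, Nat.cast_zero, zero_add, div_one, ENNReal.rpow_one] at h
  exact ne_top_of_le_ne_top (ENNReal.mul_ne_top ENNReal.coe_ne_top ENNReal.coe_ne_top) h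

lemma rowsum_le_norm (A : MatR M) (hA : ∀ i j, 0 ≤ A i j) (i : Fin M) :
    ∑ j, A i j ≤ ‖cmap A‖ := by
  rw [Matrix.linfty_opNorm_def]
  have h1 : ∑ j, A i j = ((∑ j, ‖cmap A i j‖₊ : NNReal) : ℝ) := by
    push_cast
    refine Finset.sum_congr rfl fun j _ => ?_
    rw [cmap_apply, Complex.norm_real, Real.norm_of_nonneg (hA i j)]
  rw [h1, NNReal.coe_le_coe]
  exact Finset.le_sup (f := fun i => ∑ j, ‖cmap A i j‖₊) (Finset.mem_univ i)

lemma entry_le_norm (A : MatR M) (hA : ∀ i j, 0 ≤ A i j) (i j : Fin M) :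
    A i j ≤ ‖cmap A‖ := by
  refine le_trans ?_ (rowsum_le_norm A hA i)
  exact Finset.single_le_sum (fun k _ => hA i k) (Finset.mem_univ j)

lemma norm_le_of_rowsums (A : MatR M) (hA : ∀ i j, 0 ≤ A i j) {c : ℝ} (hc : 0 ≤ c)
    (hrow : ∀ i, ∑ j, A i j ≤ c) : ‖cmap A‖ ≤ c := by
  rw [Matrix.linfty_opNorm_def, ← Real.coe_toNNReal c hc, NNReal.coe_le_coe]
  refine Finset.sup_le fun i _ => ?_
  rw [← NNReal.coe_le_coe, Real.coe_toNNReal c hc]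
  refine le_trans (le_of_eq ?_) (hrow i)
  push_cast
  refine Finset.sum_congr rfl fun j _ => ?_
  rw [cmap_apply, Complex.norm_real, Real.norm_of_nonneg (hA i j)]

lemma norm_mono (A B : MatR M) (hA : ∀ i j, 0 ≤ A i j) (hB : ∀ i j, 0 ≤ B i j)
    (hAB : ∀ i j, A i j ≤ B i j) : ‖cmap A‖ ≤ ‖cmap B‖ :=
  norm_le_of_rowsums A hA (norm_nonneg _) fun i =>
    le_trans (Finset.sum_le_sum fun j _ => hAB i j) (rowsum_le_norm B hB i)

lemma pow_entry_nonneg {A : MatR M} (hA : ∀ i j, 0 ≤ A i j) (n : ℕ) :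
    ∀ i j, 0 ≤ (A ^ n) i j := by
  induction n with
  | zero => intro i j; rw [pow_zero]; by_cases h : i = j <;> simp [Matrix.one_apply, h]
  | succ n ih =>
    intro i j
    rw [pow_succ, Matrix.mul_apply]
    exact Finset.sum_nonneg fun k _ => mul_nonneg (ih i k) (hA k j)

lemma pow_entry_mono {A B : MatR M} (hA : ∀ i j, 0 ≤ A i j) (hB : ∀ i j, 0 ≤ B i j)
    (hAB : ∀ i j, A i j ≤ B i j) (n : ℕ) : ∀ i j, (A ^ n) i j ≤ (B ^ n) i j := by
  induction n with
  | zero => intro i j; simp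
  | succ n ih =>
    intro i j
    rw [pow_succ, pow_succ, Matrix.mul_apply, Matrix.mul_apply]
    refine Finset.sum_le_sum fun k _ => ?_
    exact mul_le_mul (ih i k) (hAB k j) (hA k j) (pow_entry_nonneg hB n i k)

lemma pow_entry_mul_le {A : MatR M} (hA : ∀ i j, 0 ≤ A i j) (m n : ℕ) (i j k : Fin M) :
    (A ^ m) i k * (A ^ n) k j ≤ (A ^ (m + n)) i j := by
  rw [pow_add, Matrix.mul_apply]
  exact Finset.single_le_sum
    (fun l _ => mul_nonneg (pow_entry_nonneg hA m i l) (pow_entry_nonneg hA n l j))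
    (Finset.mem_univ k)

lemma gelfand (A : MatR M) :
    Tendsto (fun n : ℕ => ‖cmap (A ^ n)‖ ^ (1 / (n : ℝ))) atTop (𝓝 (rhoC A)) := by
  have h := spectrum.pow_nnnorm_pow_one_div_tendsto_nhds_spectralRadius (cmap A)
  have h2 := (ENNReal.tendsto_toReal (specC_ne_top A)).comp h
  refine h2.congr fun n => ?_
  simp only [Function.comp_apply]
  rw [← ENNReal.toReal_rpow, ← cmap_pow]
  congr 1

lemma rhoC_mono {A B : MatR M} (hA : ∀ i j, 0 ≤ A i j) (hB : ∀ i j, 0 ≤ B i j)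
    (hAB : ∀ i j, A i j ≤ B i j) : rhoC A ≤ rhoC B := by
  refine le_of_tendsto_of_tendsto' (gelfand A) (gelfand B) fun n => ?_
  exact Real.rpow_le_rpow (norm_nonneg _)
    (norm_mono _ _ (pow_entry_nonneg hA n) (pow_entry_nonneg hB n) (pow_entry_mono hA hB hAB n))
    (by positivity)

lemma tendsto_rpow_one_div_nat {c : ℝ} (hc : 0 < c) :
    Tendsto (fun n : ℕ => c ^ (1 / (n : ℝ))) atTop (𝓝 1) := by
  have h1 : Tendsto (fun n : ℕ => Real.log c * (1 / (n : ℝ))) atTop (𝓝 0) := by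
    simpa using (tendsto_one_div_atTop_nhds_zero_nat).const_mul (Real.log c)
  have h2 := (Real.continuous_exp.tendsto 0).comp h1
  rw [Real.exp_zero] at h2
  refine h2.congr fun n => ?_
  simp only [Function.comp_apply]
  rw [← Real.exp_log hc, ← Real.exp_mul, Real.exp_log hc]

lemma le_rhoC_of_diag {A : MatR M} (hA : ∀ i j, 0 ≤ A i j) {n : ℕ} (hn : 1 ≤ n) (i : Fin M)
    {c : ℝ} (hc : 0 ≤ c) (h : c ≤ (A ^ n) i i) : c ^ (1 / (n : ℝ)) ≤ rhoC A := by
  have hkey : ∀ k : ℕ, c ^ k ≤ (A ^ (n * k)) i i := by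
    intro k
    induction k with
    | zero => simp [Matrix.one_apply]
    | succ k ih =>
      have h2 : c ^ k * c ≤ (A ^ (n * k)) i i * (A ^ n) i i :=
        mul_le_mul ih h hc (pow_entry_nonneg hA _ i i)
      calc c ^ (k + 1) = c ^ k * c := by ring
        _ ≤ (A ^ (n * k)) i i * (A ^ n) i i := h2
        _ ≤ (A ^ (n * k + n)) i i := pow_entry_mul_le hA _ _ i i i
        _ = (A ^ (n * (k + 1))) i i := by ring_nf
  have hsub : Tendsto (fun k : ℕ => ‖cmap (A ^ (n * k))‖ ^ (1 / ((n * k : ℕ) : ℝ)))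
      atTop (𝓝 (rhoC A)) := by
    refine (gelfand A).comp (Filter.tendsto_atTop_atTop.2 fun b => ⟨b, fun k hk => ?_⟩)
    calc b ≤ k := hk
      _ ≤ n * k := Nat.le_mul_of_pos_left k hn
  refine ge_of_tendsto hsub ?_
  filter_upwards [eventually_ge_atTop 1] with k hk
  have hnk : (0:ℝ) < (n : ℝ) * (k : ℝ) := by
    have := mul_pos (by exact_mod_cast hn : (0:ℝ) < n) (by exact_mod_cast hk : (0:ℝ) < k)
    exact this
  have hle : c ^ (k : ℕ) ≤ ‖cmap (A ^ (n * k))‖ :=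
    le_trans (hkey k) (entry_le_norm _ (pow_entry_nonneg hA _) i i)
  have h3 : (c ^ (k:ℕ)) ^ (1 / ((n*k : ℕ) : ℝ)) ≤ ‖cmap (A ^ (n * k))‖ ^ (1 / ((n*k : ℕ):ℝ)) :=
    Real.rpow_le_rpow (pow_nonneg hc _) hle (by positivity)
  refine le_trans (le_of_eq ?_) h3
  rw [← Real.rpow_natCast c k, ← Real.rpow_mul hc]
  congr 1
  push_cast
  field_simp

lemma rhoC_pos_of_diag_pos {A : MatR M} (hA : ∀ i j, 0 ≤ A i j) {n : ℕ} (hn : 1 ≤ n)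
    {i : Fin M} (h : 0 < (A ^ n) i i) : 0 < rhoC A :=
  lt_of_lt_of_le (Real.rpow_pos_of_pos h (1 / (n:ℝ))) (le_rhoC_of_diag hA hn i h.le le_rfl)

lemma mulVec_mono {A : MatR M} (hA : ∀ i j, 0 ≤ A i j) {x y : Fin M → ℝ}
    (hxy : ∀ i, x i ≤ y i) : ∀ i, (A *ᵥ x) i ≤ (A *ᵥ y) i := by
  intro i
  simp only [Matrix.mulVec, dotProduct]
  exact Finset.sum_le_sum fun j _ => mul_le_mul_of_nonneg_left (hxy j) (hA i j)

lemma rhoC_le_of_mulVec (hMne : Nonempty (Fin M)) {A : MatR M} (hA : ∀ i j, 0 ≤ A i j)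
    {z : Fin M → ℝ} (hz : ∀ i, 0 < z i) {t : ℝ} (ht : 0 ≤ t)
    (h : ∀ i, t * z i ≤ (A *ᵥ z) i) : t ≤ rhoC A := by
  rcases eq_or_lt_of_le ht with rfl | htpos
  · exact rhoC_nonneg A
  have hkey : ∀ m : ℕ, ∀ i, t ^ m * z i ≤ ((A ^ m) *ᵥ z) i := by
    intro m
    induction m with
    | zero => intro i; simp [Matrix.one_mulVec]
    | succ m ih =>
      intro i
      have h1 : ((A ^ (m+1)) *ᵥ z) i = (A *ᵥ ((A ^ m) *ᵥ z)) i := by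
        rw [Matrix.mulVec_mulVec, ← pow_succ']
      rw [h1]
      have h3 : (A *ᵥ (t ^ m • z)) i ≤ (A *ᵥ ((A ^ m) *ᵥ z)) i :=
        mulVec_mono hA (fun j => ih j) i
      have h4 : (A *ᵥ (t ^ m • z)) i = t ^ m * (A *ᵥ z) i := by
        rw [Matrix.mulVec_smul]; rfl
      calc t ^ (m+1) * z i = t ^ m * (t * z i) := by ring
        _ ≤ t ^ m * (A *ᵥ z) i := by
            exact mul_le_mul_of_nonneg_left (h i) (pow_nonneg ht m)
        _ = (A *ᵥ (t ^ m • z)) i := h4.symm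
        _ ≤ _ := h3
  obtain ⟨i0⟩ := hMne
  set Z : ℝ := ∑ j, z j with hZ
  have hZpos : 0 < Z := Finset.sum_pos (fun j _ => hz j) ⟨i0, Finset.mem_univ i0⟩
  have hbound : ∀ m : ℕ, t ^ m * z i0 ≤ Z * ‖cmap (A ^ m)‖ := by
    intro m
    refine le_trans (hkey m i0) ?_
    have h1 : ((A ^ m) *ᵥ z) i0 = ∑ j, (A ^ m) i0 j * z j := rfl
    rw [h1]
    have h2 : ∀ j, (A ^ m) i0 j * z j ≤ ‖cmap (A ^ m)‖ * z j := fun j =>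
      mul_le_mul_of_nonneg_right (entry_le_norm _ (pow_entry_nonneg hA m) i0 j) (hz j).le
    calc ∑ j, (A ^ m) i0 j * z j ≤ ∑ j, ‖cmap (A ^ m)‖ * z j := Finset.sum_le_sum fun j _ => h2 j
      _ = Z * ‖cmap (A ^ m)‖ := by rw [← Finset.mul_sum, mul_comm]
  -- take m-th roots
  have hlim : Tendsto (fun m : ℕ => t * (z i0 / Z) ^ (1 / (m:ℝ))) atTop (𝓝 t) := by
    have := (tendsto_rpow_one_div_nat (div_pos (hz i0) hZpos)).const_mul t
    simpa using this
  refine le_of_tendsto_of_tendsto hlim (gelfand A) ?_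
  filter_upwards [eventually_ge_atTop 1] with m hm
  have hmpos : (0:ℝ) < m := by exact_mod_cast hm
  have hzZ : 0 < z i0 / Z := div_pos (hz i0) hZpos
  have h5 : (t ^ m * (z i0 / Z)) ^ (1/(m:ℝ)) ≤ ‖cmap (A ^ m)‖ ^ (1/(m:ℝ)) := by
    refine Real.rpow_le_rpow (by positivity) ?_ (by positivity)
    calc t ^ m * (z i0 / Z) = t ^ m * z i0 / Z := by ring
      _ ≤ Z * ‖cmap (A ^ m)‖ / Z := div_le_div_of_nonneg_right (hbound m) hZpos.le
      _ = ‖cmap (A ^ m)‖ := by field_simp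
  refine le_trans (le_of_eq ?_) h5
  rw [Real.mul_rpow (by positivity) hzZ.le, ← Real.rpow_natCast t m,
    ← Real.rpow_mul ht]
  congr 2
  field_simp
  simp
lemma spectrum_iff_eigen {K : Type*} [Field K] {A : Matrix (Fin M) (Fin M) K} {t : K} :
    t ∈ spectrum K A ↔ ∃ v, v ≠ 0 ∧ A *ᵥ v = t • v := by
  rw [spectrum.mem_iff, Matrix.isUnit_iff_isUnit_det, isUnit_iff_ne_zero, not_not,
    ← Matrix.exists_mulVec_eq_zero_iff]
  constructor
  · rintro ⟨v, hv, hveq⟩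
    refine ⟨v, hv, ?_⟩
    have := hveq
    rw [Matrix.sub_mulVec, Algebra.algebraMap_eq_smul_one, Matrix.smul_mulVec,
      Matrix.one_mulVec, sub_eq_zero] at this
    exact this.symm
  · rintro ⟨v, hv, hveq⟩
    refine ⟨v, hv, ?_⟩
    rw [Matrix.sub_mulVec, Algebra.algebraMap_eq_smul_one, Matrix.smul_mulVec,
      Matrix.one_mulVec, sub_eq_zero, hveq]

lemma nontrivial_matC (hMne : Nonempty (Fin M)) : Nontrivial (Matrix (Fin M) (Fin M) ℂ) := by
  obtain ⟨i0⟩ := hMne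
  refine ⟨0, 1, fun h => ?_⟩
  have := congr_fun (congr_fun h i0) i0
  simp [Matrix.one_apply] at this

theorem pf_pos (hMne : Nonempty (Fin M)) {B : MatR M} (hB : ∀ i j, 0 < B i j) :
    ∃ u : Fin M → ℝ, (∀ i, 0 ≤ u i) ∧ u ≠ 0 ∧ B *ᵥ u = rhoC B • u := by
  haveI := nontrivial_matC hMne
  obtain ⟨μ, hμmem, hμ⟩ :=
    spectrum.exists_nnnorm_eq_spectralRadius_of_nonempty (spectrum.nonempty (cmap B))
  obtain ⟨v, hv0, hveig⟩ := spectrum_iff_eigen.mp hμmem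
  set u : Fin M → ℝ := fun i => ‖v i‖ with hu
  have hρ : rhoC B = ‖μ‖ := by
    rw [rhoC, ← hμ]; simp
  have hu0 : ∀ i, 0 ≤ u i := fun i => norm_nonneg _
  have hune : u ≠ 0 := by
    intro h
    apply hv0
    funext i
    have := congr_fun h i
    simpa [hu] using this
  have hBu : ∀ i, rhoC B * u i ≤ (B *ᵥ u) i := by
    intro i
    have h1 : (cmap B *ᵥ v) i = μ * v i := by rw [hveig]; simp
    calc rhoC B * u i = ‖μ * v i‖ := by rw [hρ, norm_mul]
      _ = ‖∑ j, cmap B i j * v j‖ := by rw [← h1]; rfl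
      _ ≤ ∑ j, ‖cmap B i j * v j‖ := norm_sum_le _ _
      _ = ∑ j, B i j * u j := by
          refine Finset.sum_congr rfl fun j _ => ?_
          rw [norm_mul]
          congr 1
          show ‖((B i j : ℝ) : ℂ)‖ = B i j
          rw [Complex.norm_real, Real.norm_of_nonneg (hB i j).le]
      _ = (B *ᵥ u) i := rfl
  by_cases hweq : B *ᵥ u = rhoC B • u
  · exact ⟨u, hu0, hune, hweq⟩
  exfalso
  set w : Fin M → ℝ := B *ᵥ u - rhoC B • u with hwdef
  have hw0 : ∀ i, 0 ≤ w i := fun i => by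
    simp only [hwdef, Pi.sub_apply, Pi.smul_apply, smul_eq_mul, sub_nonneg]
    exact hBu i
  have hwne : w ≠ 0 := sub_ne_zero.2 hweq
  obtain ⟨k0, hk0⟩ : ∃ k, 0 < w k := by
    by_contra h
    push_neg at h
    exact hwne (funext fun i => le_antisymm (h i) (hw0 i))
  obtain ⟨j0, hj0⟩ : ∃ j, 0 < u j := by
    by_contra h
    push_neg at h
    exact hune (funext fun i => le_antisymm (h i) (hu0 i))
  set z : Fin M → ℝ := B *ᵥ u with hzdef
  have hz : ∀ i, 0 < z i := fun i =>
    Finset.sum_pos' (fun j _ => mul_nonneg (hB i j).le (hu0 j))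
      ⟨j0, Finset.mem_univ j0, mul_pos (hB i j0) hj0⟩
  have hBw : ∀ i, 0 < (B *ᵥ w) i := fun i =>
    Finset.sum_pos' (fun j _ => mul_nonneg (hB i j).le (hw0 j))
      ⟨k0, Finset.mem_univ k0, mul_pos (hB i k0) hk0⟩
  have hne : (Finset.univ : Finset (Fin M)).Nonempty := Finset.univ_nonempty
  set δ : ℝ := Finset.univ.inf' hne (fun i => (B *ᵥ w) i / z i) with hδdef
  have hδpos : 0 < δ := by
    rw [hδdef, Finset.lt_inf'_iff]
    exact fun i _ => div_pos (hBw i) (hz i)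
  have hkey : ∀ i, (rhoC B + δ) * z i ≤ (B *ᵥ z) i := by
    intro i
    have h1 : B *ᵥ z = rhoC B • z + B *ᵥ w := by
      have : z = rhoC B • u + w := by rw [hwdef]; abel
      calc B *ᵥ z = B *ᵥ (rhoC B • u + w) := by rw [← this]
        _ = rhoC B • (B *ᵥ u) + B *ᵥ w := by rw [Matrix.mulVec_add, Matrix.mulVec_smul]
        _ = rhoC B • z + B *ᵥ w := by rw [← hzdef]
    have h2 : δ * z i ≤ (B *ᵥ w) i := by
      have h3 : δ ≤ (B *ᵥ w) i / z i := Finset.inf'_le _ (Finset.mem_univ i)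
      have := (le_div_iff₀ (hz i)).mp h3
      linarith
    have h4 : (B *ᵥ z) i = rhoC B * z i + (B *ᵥ w) i := by
      rw [h1]; simp
    rw [h4]; nlinarith [hz i]
  have hfinal := rhoC_le_of_mulVec hMne (fun i j => (hB i j).le) hz
    (add_nonneg (rhoC_nonneg B) hδpos.le) hkey
  linarith
lemma mem_spectrumC {A : MatR M} {t : ℝ} (h : t ∈ spectrum ℝ A) :
    (t : ℂ) ∈ spectrum ℂ (cmap A) := by
  obtain ⟨v, hv, hveq⟩ := spectrum_iff_eigen.mp h
  refine spectrum_iff_eigen.mpr ⟨fun j => (v j : ℂ), ?_, ?_⟩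
  · intro hc
    apply hv
    funext j
    have := congr_fun hc j
    simpa using this
  · funext i
    have h2 := congr_fun hveq i
    simp only [Matrix.mulVec, dotProduct, Pi.smul_apply, smul_eq_mul] at h2 ⊢
    calc ∑ j, cmap A i j * (v j : ℂ) = ((∑ j, A i j * v j : ℝ) : ℂ) := by
          push_cast
          exact Finset.sum_congr rfl fun j _ => rfl
      _ = ((t * v i : ℝ) : ℂ) := by rw [h2]
      _ = (t : ℂ) * (v i : ℂ) := by push_cast; ring

lemma specR_le (A : MatR M) : spectralRadius ℝ A ≤ spectralRadius ℂ (cmap A) := by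
  simp only [spectralRadius]
  refine iSup₂_le fun t ht => ?_
  have h1 : (‖t‖₊ : ℝ≥0∞) = ‖(t : ℂ)‖₊ := by
    rw [Complex.nnnorm_real]
  rw [h1]
  exact le_iSup₂ (f := fun k (_ : k ∈ spectrum ℂ (cmap A)) => (‖k‖₊ : ℝ≥0∞)) _ (mem_spectrumC ht)

theorem pf_exists (hMne : Nonempty (Fin M)) {A : MatR M} (hA : ∀ i j, 0 ≤ A i j) :
    ∃ u : Fin M → ℝ, (∀ i, 0 ≤ u i) ∧ u ≠ 0 ∧ A *ᵥ u = rhoC A • u ∧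
      (spectralRadius ℝ A).toReal = rhoC A := by
  classical
  set Bm : ℕ → MatR M := fun n => Matrix.of fun i j => A i j + 1 / (n + 1 : ℝ) with hBm
  have hε : ∀ n : ℕ, (0:ℝ) < 1 / (n + 1 : ℝ) := fun n => by positivity
  have hBpos : ∀ n i j, 0 < Bm n i j := fun n i j => add_pos_of_nonneg_of_pos (hA i j) (hε n)
  have hABm : ∀ n i j, A i j ≤ Bm n i j := fun n i j => le_add_of_nonneg_right (hε n).le
  set r : ℕ → ℝ := fun n => rhoC (Bm n) with hr
  have hr_anti : Antitone r := by
    intro m n hmn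
    refine rhoC_mono (fun i j => (hBpos n i j).le) (fun i j => (hBpos m i j).le) fun i j => ?_
    have : (1:ℝ) / (n + 1) ≤ 1 / (m + 1) := by
      apply one_div_le_one_div_of_le (by positivity)
      exact_mod_cast Nat.add_le_add_right hmn 1
    simpa [hBm] using add_le_add_left this (A i j)
  have hrlb : ∀ n, rhoC A ≤ r n := fun n =>
    rhoC_mono hA (fun i j => (hBpos n i j).le) (hABm n)
  set L : ℝ := ⨅ n, r n with hLdef
  have hbdd : BddBelow (Set.range r) := ⟨rhoC A, by rintro x ⟨n, rfl⟩; exact hrlb n⟩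
  have hLtend : Tendsto r atTop (𝓝 L) := tendsto_atTop_ciInf hr_anti hbdd
  have hLlb : rhoC A ≤ L := le_ciInf hrlb
  have hL0 : 0 ≤ L := le_trans (rhoC_nonneg A) hLlb
  -- eigenvectors
  have hex : ∀ n : ℕ, ∃ u : Fin M → ℝ, (∀ i, 0 ≤ u i) ∧ (∑ i, u i = 1) ∧
      Bm n *ᵥ u = r n • u := by
    intro n
    obtain ⟨u', hu0, hune, heig⟩ := pf_pos hMne (hBpos n)
    have hspos : 0 < ∑ i, u' i := by
      obtain ⟨j0, hj0⟩ : ∃ j, 0 < u' j := by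
        by_contra h
        push_neg at h
        exact hune (funext fun i => le_antisymm (h i) (hu0 i))
      exact Finset.sum_pos' (fun i _ => hu0 i) ⟨j0, Finset.mem_univ j0, hj0⟩
    refine ⟨(∑ i, u' i)⁻¹ • u', fun i => ?_, ?_, ?_⟩
    · exact mul_nonneg (inv_nonneg.2 hspos.le) (hu0 i)
    · simp only [Pi.smul_apply, smul_eq_mul, ← Finset.mul_sum]
      exact inv_mul_cancel₀ hspos.ne'
    · rw [Matrix.mulVec_smul, heig, smul_comm]
  choose u hu0 husum heig using hex
  have huball : ∀ n, u n ∈ Metric.closedBall (0 : Fin M → ℝ) 1 := by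
    intro n
    rw [Metric.mem_closedBall, dist_zero_right]
    refine pi_norm_le_iff_of_nonneg (by norm_num) |>.mpr fun i => ?_
    rw [Real.norm_of_nonneg (hu0 n i)]
    calc u n i ≤ ∑ j, u n j := Finset.single_le_sum (fun j _ => hu0 n j) (Finset.mem_univ i)
      _ = 1 := husum n
  obtain ⟨a, _, φ, hφ, hconv⟩ := tendsto_subseq_of_bounded Metric.isBounded_closedBall huball
  have hφtop : Tendsto φ atTop atTop := hφ.tendsto_atTop
  have hai : ∀ i, Tendsto (fun k => u (φ k) i) atTop (𝓝 (a i)) := fun i =>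
    ((continuous_apply i).tendsto a).comp hconv
  have hεtend : Tendsto (fun k => 1 / ((φ k : ℝ) + 1)) atTop (𝓝 0) := by
    have h1 : Tendsto (fun n : ℕ => 1 / ((n : ℝ) + 1)) atTop (𝓝 0) :=
      tendsto_one_div_add_atTop_nhds_zero_nat
    exact h1.comp hφtop
  have hrφ : Tendsto (fun k => r (φ k)) atTop (𝓝 L) := hLtend.comp hφtop
  have heiga : A *ᵥ a = L • a := by
    funext i
    have hLHS : Tendsto (fun k => (Bm (φ k) *ᵥ u (φ k)) i) atTop (𝓝 ((A *ᵥ a) i)) := by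
      have : ∀ k, (Bm (φ k) *ᵥ u (φ k)) i = ∑ j, (A i j + 1 / ((φ k : ℝ) + 1)) * u (φ k) j := by
        intro k; rfl
      rw [show ((A *ᵥ a) i) = ∑ j, (A i j + 0) * a j by simp [Matrix.mulVec, dotProduct]]
      refine Tendsto.congr (fun k => (this k).symm) (tendsto_finset_sum _ fun j _ => ?_)
      exact ((tendsto_const_nhds.add hεtend).mul (hai j))
    have hRHS : Tendsto (fun k => (Bm (φ k) *ᵥ u (φ k)) i) atTop (𝓝 (L * a i)) := by
      have : ∀ k, (Bm (φ k) *ᵥ u (φ k)) i = r (φ k) * u (φ k) i := by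
        intro k
        rw [heig (φ k)]
        simp
      exact Tendsto.congr (fun k => (this k).symm) (hrφ.mul (hai i))
    have := tendsto_nhds_unique hLHS hRHS
    simpa using this
  have hasum : ∑ i, a i = 1 := by
    have h1 : Tendsto (fun k => ∑ i, u (φ k) i) atTop (𝓝 (∑ i, a i)) :=
      tendsto_finset_sum _ fun i _ => hai i
    have h2 : Tendsto (fun k => ∑ i, u (φ k) i) atTop (𝓝 1) := by
      refine tendsto_const_nhds.congr fun k => ?_
      rw [husum (φ k)]
    exact tendsto_nhds_unique h1 h2
  have ha0 : ∀ i, 0 ≤ a i := fun i => ge_of_tendsto (hai i) (Eventually.of_forall fun k => hu0 (φ k) i)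
  have hane : a ≠ 0 := by
    intro h
    rw [h] at hasum
    simpa using hasum
  have hLspec : L ∈ spectrum ℝ A := spectrum_iff_eigen.mpr ⟨a, hane, heiga⟩
  -- identification of spectral radii
  have hge : spectralRadius ℂ (cmap A) ≤ spectralRadius ℝ A := by
    have h1 : spectralRadius ℂ (cmap A) = ENNReal.ofReal (rhoC A) :=
      (ENNReal.ofReal_toReal (specC_ne_top A)).symm
    have h2 : ENNReal.ofReal (rhoC A) ≤ ENNReal.ofReal L := ENNReal.ofReal_le_ofReal hLlb
    have h3 : (ENNReal.ofReal L) = (‖L‖₊ : ℝ≥0∞) := (Real.enorm_eq_ofReal hL0).symm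
    have h4 : (‖L‖₊ : ℝ≥0∞) ≤ spectralRadius ℝ A := by
      simp only [spectralRadius]
      exact le_iSup₂ (f := fun k (_ : k ∈ spectrum ℝ A) => (‖k‖₊ : ℝ≥0∞)) _ hLspec
    rw [h1]
    exact h2.trans (h3 ▸ h4)
  have heq : spectralRadius ℝ A = spectralRadius ℂ (cmap A) := le_antisymm (specR_le A) hge
  have hLle : L ≤ rhoC A := by
    have h4 : (‖L‖₊ : ℝ≥0∞) ≤ spectralRadius ℂ (cmap A) := by
      rw [← heq]
      simp only [spectralRadius]
      exact le_iSup₂ (f := fun k (_ : k ∈ spectrum ℝ A) => (‖k‖₊ : ℝ≥0∞)) _ hLspec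
    have h5 := ENNReal.toReal_mono (specC_ne_top A) h4
    simpa [Real.norm_of_nonneg hL0, rhoC] using h5
  have hLeq : L = rhoC A := le_antisymm hLle hLlb
  refine ⟨a, ha0, hane, ?_, ?_⟩
  · rw [← hLeq]; exact heiga
  · rw [heq, rhoC]

lemma exists_cycle {A : MatR M} (hA : ∀ i j, 0 ≤ A i j) {t : ℝ} (ht : 0 < t)
    {u : Fin M → ℝ} (hu0 : ∀ i, 0 ≤ u i) (hune : u ≠ 0) (heig : A *ᵥ u = t • u) :
    ∃ n, 1 ≤ n ∧ ∃ k, 0 < (A ^ n) k k := by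
  classical
  have hstep : ∀ p : {i : Fin M // 0 < u i}, ∃ j, 0 < A p.1 j ∧ 0 < u j := by
    rintro ⟨i, hi⟩
    by_contra h
    push_neg at h
    have hzero : (A *ᵥ u) i = 0 := by
      show ∑ j, A i j * u j = 0
      refine Finset.sum_eq_zero fun j _ => ?_
      rcases eq_or_lt_of_le (hA i j) with hij | hij
      · rw [← hij, zero_mul]
      · have := h j hij
        have huj : u j = 0 := le_antisymm this (hu0 j)
        rw [huj, mul_zero]
    rw [heig] at hzero
    have : t * u i = 0 := hzero
    nlinarith
  obtain ⟨i0, hi0⟩ : ∃ i, 0 < u i := by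
    by_contra h
    push_neg at h
    exact hune (funext fun i => le_antisymm (h i) (hu0 i))
  set g : {i : Fin M // 0 < u i} → {i : Fin M // 0 < u i} :=
    fun p => ⟨(hstep p).choose, (hstep p).choose_spec.2⟩ with hg
  have hgpos : ∀ p, 0 < A p.1 (g p).1 := fun p => (hstep p).choose_spec.1
  set f : ℕ → {i : Fin M // 0 < u i} := fun n => g^[n] ⟨i0, hi0⟩ with hf
  have hfs : ∀ n, f (n + 1) = g (f n) := fun n => Function.iterate_succ_apply' g n _
  have hstep2 : ∀ n, 0 < A (f n).1 (f (n + 1)).1 := fun n => by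
    rw [hfs]; exact hgpos (f n)
  have hpath : ∀ d s, 0 < (A ^ d) (f s).1 (f (s + d)).1 := by
    intro d
    induction d with
    | zero => intro s; simp [Matrix.one_apply]
    | succ d ih =>
      intro s
      have h1 := pow_entry_mul_le hA d 1 (f s).1 (f (s + d + 1)).1 (f (s + d)).1
      rw [pow_one] at h1
      exact lt_of_lt_of_le (mul_pos (ih s) (hstep2 (s + d))) h1
  obtain ⟨s, t', hst, hfeq⟩ := Finite.exists_ne_map_eq_of_infinite f
  rcases hst.lt_or_gt with hlt | hlt
  · refine ⟨t' - s, by omega, (f t').1, ?_⟩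
    have := hpath (t' - s) s
    rw [show s + (t' - s) = t' by omega, hfeq] at this
    exact this
  · refine ⟨s - t', by omega, (f s).1, ?_⟩
    have := hpath (s - t') t'
    rw [show t' + (s - t') = s by omega, ← hfeq] at this
    exact this

lemma holder_sum {x y : Fin M → ℝ} (hx : ∀ i, 0 ≤ x i) (hy : ∀ i, 0 ≤ y i)
    {a b : ℝ} (ha : 0 < a) (hb : 0 < b) (hab : a + b = 1) :
    ∑ i, x i ^ a * y i ^ b ≤ (∑ i, x i) ^ a * (∑ i, y i) ^ b := by
  rcases eq_or_lt_of_le (Finset.sum_nonneg fun i _ => hx i) with hX | hX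
  · have hx0 : ∀ i ∈ Finset.univ, x i = 0 :=
      fun i _ => le_antisymm (by
        have := (Finset.sum_eq_zero_iff_of_nonneg (fun i _ => hx i)).mp hX.symm
        exact le_of_eq (this i (Finset.mem_univ i))) (hx i)
    rw [← hX, Real.zero_rpow ha.ne', zero_mul]
    refine le_of_eq (Finset.sum_eq_zero fun i hi => ?_)
    rw [hx0 i hi, Real.zero_rpow ha.ne', zero_mul]
  rcases eq_or_lt_of_le (Finset.sum_nonneg fun i _ => hy i) with hY | hY
  · have hy0 : ∀ i ∈ Finset.univ, y i = 0 :=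
      fun i _ => le_antisymm (by
        have := (Finset.sum_eq_zero_iff_of_nonneg (fun i _ => hy i)).mp hY.symm
        exact le_of_eq (this i (Finset.mem_univ i))) (hy i)
    rw [← hY, Real.zero_rpow hb.ne', mul_zero]
    refine le_of_eq (Finset.sum_eq_zero fun i hi => ?_)
    rw [hy0 i hi, Real.zero_rpow hb.ne', mul_zero]
  set X := ∑ i, x i
  set Y := ∑ i, y i
  have hkey : ∀ i, x i ^ a * y i ^ b ≤ X ^ a * Y ^ b * (a * (x i / X) + b * (y i / Y)) := by
    intro i
    have hgm := Real.geom_mean_le_arith_mean2_weighted ha.le hb.le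
      (div_nonneg (hx i) hX.le) (div_nonneg (hy i) hY.le) hab
    have hrw : x i ^ a * y i ^ b = X ^ a * Y ^ b * ((x i / X) ^ a * (y i / Y) ^ b) := by
      rw [Real.div_rpow (hx i) hX.le, Real.div_rpow (hy i) hY.le]
      field_simp
    rw [hrw]
    exact mul_le_mul_of_nonneg_left hgm (by positivity)
  calc ∑ i, x i ^ a * y i ^ b ≤ ∑ i, X ^ a * Y ^ b * (a * (x i / X) + b * (y i / Y)) :=
        Finset.sum_le_sum fun i _ => hkey i
    _ = X ^ a * Y ^ b * (a * (X / X) + b * (Y / Y)) := by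
        rw [← Finset.mul_sum]
        congr 1
        rw [Finset.sum_add_distrib, ← Finset.mul_sum, ← Finset.mul_sum,
          ← Finset.sum_div, ← Finset.sum_div]
    _ = X ^ a * Y ^ b := by
        rw [div_self hX.ne', div_self hY.ne', mul_one, mul_one, hab, mul_one]
lemma specR_toReal_eq (hMne : Nonempty (Fin M)) {A : MatR M} (hA : ∀ i j, 0 ≤ A i j) :
    (spectralRadius ℝ A).toReal = rhoC A :=
  (pf_exists hMne hA).choose_spec.2.2.2

variable {r : Fin M → ℝ} {P : MatR M}

lemma pimat_nonneg (hP : ∀ i j, 0 ≤ P i j) (θ : ℝ) : ∀ i j, 0 ≤ PiMat r θ P i j :=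
  fun i j => mul_nonneg (hP i j) (Real.exp_pos _).le

lemma pimat_combine (hP : ∀ i j, 0 ≤ P i j) {θ1 θ2 a b : ℝ} (ha : 0 < a) (hb : 0 < b)
    (hab : a + b = 1) (k j : Fin M) :
    PiMat r (a * θ1 + b * θ2) P k j =
      (PiMat r θ1 P k j) ^ a * (PiMat r θ2 P k j) ^ b := by
  show P k j * Real.exp ((a * θ1 + b * θ2) * r j) =
    (P k j * Real.exp (θ1 * r j)) ^ a * (P k j * Real.exp (θ2 * r j)) ^ b
  rcases eq_or_lt_of_le (hP k j) with h0 | h0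
  · rw [← h0]
    simp [Real.zero_rpow ha.ne', Real.zero_rpow hb.ne']
  · rw [Real.mul_rpow h0.le (Real.exp_pos _).le, Real.mul_rpow h0.le (Real.exp_pos _).le,
      ← Real.exp_mul, ← Real.exp_mul]
    calc P k j * Real.exp ((a * θ1 + b * θ2) * r j)
        = (P k j ^ a * P k j ^ b) * Real.exp (θ1 * r j * a + θ2 * r j * b) := by
          rw [← Real.rpow_add h0, hab, Real.rpow_one]
          congr 2
          ring
      _ = P k j ^ a * Real.exp (θ1 * r j * a) * (P k j ^ b * Real.exp (θ2 * r j * b)) := by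
          rw [Real.exp_add]; ring

lemma entry_holder (hP : ∀ i j, 0 ≤ P i j) {θ1 θ2 a b : ℝ} (ha : 0 < a) (hb : 0 < b)
    (hab : a + b = 1) (n : ℕ) (i j : Fin M) :
    (PiMat r (a * θ1 + b * θ2) P ^ n) i j ≤
      ((PiMat r θ1 P ^ n) i j) ^ a * ((PiMat r θ2 P ^ n) i j) ^ b := by
  set X := PiMat r (a * θ1 + b * θ2) P
  set Y := PiMat r θ1 P
  set Z := PiMat r θ2 P
  have hX : ∀ i j, 0 ≤ X i j := pimat_nonneg hP _
  have hY : ∀ i j, 0 ≤ Y i j := pimat_nonneg hP _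
  have hZ : ∀ i j, 0 ≤ Z i j := pimat_nonneg hP _
  induction n generalizing i j with
  | zero =>
    simp only [pow_zero]
    rcases eq_or_ne i j with rfl | hij
    · simp [Matrix.one_apply]
    · simp [Matrix.one_apply, hij, Real.zero_rpow ha.ne', Real.zero_rpow hb.ne']
  | succ n ih =>
    rw [pow_succ, pow_succ, pow_succ, Matrix.mul_apply, Matrix.mul_apply, Matrix.mul_apply]
    have hterm : ∀ k, (X ^ n) i k * X k j ≤
        ((Y ^ n) i k * Y k j) ^ a * ((Z ^ n) i k * Z k j) ^ b := by
      intro k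
      have h1 : (X ^ n) i k * X k j ≤
          (((Y ^ n) i k) ^ a * ((Z ^ n) i k) ^ b) * ((Y k j) ^ a * (Z k j) ^ b) := by
        refine mul_le_mul (ih i k) (le_of_eq (pimat_combine hP ha hb hab k j)) (hX k j) ?_
        exact mul_nonneg (Real.rpow_nonneg (pow_entry_nonneg hY n i k) a)
          (Real.rpow_nonneg (pow_entry_nonneg hZ n i k) b)
      refine h1.trans (le_of_eq ?_)
      rw [Real.mul_rpow (pow_entry_nonneg hY n i k) (hY k j),
        Real.mul_rpow (pow_entry_nonneg hZ n i k) (hZ k j)]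
      ring
    calc ∑ k, (X ^ n) i k * X k j
        ≤ ∑ k, ((Y ^ n) i k * Y k j) ^ a * ((Z ^ n) i k * Z k j) ^ b :=
          Finset.sum_le_sum fun k _ => hterm k
      _ ≤ (∑ k, (Y ^ n) i k * Y k j) ^ a * (∑ k, (Z ^ n) i k * Z k j) ^ b :=
          holder_sum (fun k => mul_nonneg (pow_entry_nonneg hY n i k) (hY k j))
            (fun k => mul_nonneg (pow_entry_nonneg hZ n i k) (hZ k j)) ha hb hab

lemma rho_holder (hP : ∀ i j, 0 ≤ P i j) {θ1 θ2 a b : ℝ} (ha : 0 < a) (hb : 0 < b)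
    (hab : a + b = 1) :
    rhoC (PiMat r (a * θ1 + b * θ2) P) ≤
      rhoC (PiMat r θ1 P) ^ a * rhoC (PiMat r θ2 P) ^ b := by
  set X := PiMat r (a * θ1 + b * θ2) P
  set Y := PiMat r θ1 P
  set Z := PiMat r θ2 P
  have hX : ∀ i j, 0 ≤ X i j := pimat_nonneg hP _
  have hY : ∀ i j, 0 ≤ Y i j := pimat_nonneg hP _
  have hZ : ∀ i j, 0 ≤ Z i j := pimat_nonneg hP _
  have hnorm : ∀ n : ℕ, ‖cmap (X ^ n)‖ ≤ ‖cmap (Y ^ n)‖ ^ a * ‖cmap (Z ^ n)‖ ^ b := by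
    intro n
    refine norm_le_of_rowsums _ (pow_entry_nonneg hX n) (by positivity) fun i => ?_
    calc ∑ j, (X ^ n) i j ≤ ∑ j, ((Y ^ n) i j) ^ a * ((Z ^ n) i j) ^ b :=
          Finset.sum_le_sum fun j _ => entry_holder hP ha hb hab n i j
      _ ≤ (∑ j, (Y ^ n) i j) ^ a * (∑ j, (Z ^ n) i j) ^ b :=
          holder_sum (fun j => pow_entry_nonneg hY n i j) (fun j => pow_entry_nonneg hZ n i j)
            ha hb hab
      _ ≤ ‖cmap (Y ^ n)‖ ^ a * ‖cmap (Z ^ n)‖ ^ b := by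
          refine mul_le_mul ?_ ?_
            (Real.rpow_nonneg (Finset.sum_nonneg fun j _ => pow_entry_nonneg hZ n i j) b)
            (Real.rpow_nonneg (norm_nonneg _) a)
          · exact Real.rpow_le_rpow (Finset.sum_nonneg fun j _ => pow_entry_nonneg hY n i j)
              (rowsum_le_norm _ (pow_entry_nonneg hY n) i) ha.le
          · exact Real.rpow_le_rpow (Finset.sum_nonneg fun j _ => pow_entry_nonneg hZ n i j)
              (rowsum_le_norm _ (pow_entry_nonneg hZ n) i) hb.le
  refine le_of_tendsto_of_tendsto' (gelfand X)
    (((gelfand Y).rpow_const (Or.inr ha.le)).mul ((gelfand Z).rpow_const (Or.inr hb.le)))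
    fun n => ?_
  have e : ∀ x : ℝ, 0 ≤ x → (x ^ a * x ^ 0) ^ (0:ℝ) = 1 := by intro x hx; simp
  calc ‖cmap (X ^ n)‖ ^ (1 / (n:ℝ))
      ≤ (‖cmap (Y ^ n)‖ ^ a * ‖cmap (Z ^ n)‖ ^ b) ^ (1 / (n:ℝ)) :=
        Real.rpow_le_rpow (norm_nonneg _) (hnorm n) (by positivity)
    _ = (‖cmap (Y ^ n)‖ ^ (1 / (n:ℝ))) ^ a * (‖cmap (Z ^ n)‖ ^ (1 / (n:ℝ))) ^ b := by
        rw [Real.mul_rpow (by positivity) (by positivity),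
          ← Real.rpow_mul (norm_nonneg _), ← Real.rpow_mul (norm_nonneg _),
          ← Real.rpow_mul (norm_nonneg _), ← Real.rpow_mul (norm_nonneg _),
          mul_comm a (1 / (n:ℝ)), mul_comm b (1 / (n:ℝ))]

theorem main (hM : 2 ≤ M) (hP : ∀ i j, 0 ≤ P i j) :
    ConvexOn ℝ Set.univ (fun θ : ℝ => LambdaA r θ P) := by
  have hMne : Nonempty (Fin M) := ⟨⟨0, by omega⟩⟩
  have hne : (Finset.univ : Finset (Fin M)).Nonempty := Finset.univ_nonempty
  have hPi : ∀ θ : ℝ, ∀ i j, 0 ≤ PiMat r θ P i j := fun θ => pimat_nonneg hP θ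
  have hLam : ∀ θ : ℝ, LambdaA r θ P = Real.log (rhoC (PiMat r θ P)) := fun θ => by
    rw [LambdaA, specR_toReal_eq hMne (hPi θ)]
  by_cases hpos : ∃ n, 1 ≤ n ∧ ∃ k, 0 < (P ^ n) k k
  · -- positive case
    obtain ⟨n, hn, k, hk⟩ := hpos
    have hrpos : ∀ θ : ℝ, 0 < rhoC (PiMat r θ P) := by
      intro θ
      set c := Finset.univ.inf' hne fun j => Real.exp (θ * r j) with hc
      have hcpos : 0 < c := by
        rw [hc, Finset.lt_inf'_iff]
        exact fun j _ => Real.exp_pos _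
      have hlb : ∀ i j, (c • P) i j ≤ PiMat r θ P i j := by
        intro i j
        show c * P i j ≤ P i j * Real.exp (θ * r j)
        rw [mul_comm]
        exact mul_le_mul_of_nonneg_left (Finset.inf'_le _ (Finset.mem_univ j)) (hP i j)
      have hCP0 : ∀ i j, 0 ≤ (c • P) i j := fun i j =>
        mul_nonneg hcpos.le (hP i j)
      have hmono := pow_entry_mono hCP0 (hPi θ) hlb n k k
      rw [smul_pow] at hmono
      refine rhoC_pos_of_diag_pos (hPi θ) hn (i := k) (lt_of_lt_of_le ?_ hmono)
      show 0 < c ^ n * (P ^ n) k k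
      exact mul_pos (pow_pos hcpos n) hk
    refine ⟨convex_univ, ?_⟩
    intro θ1 _ θ2 _ a b ha hb hab
    simp only [smul_eq_mul]
    rcases eq_or_lt_of_le ha with rfl | ha'
    · have hb1 : b = 1 := by linarith
      simp [hb1]
    rcases eq_or_lt_of_le hb with rfl | hb'
    · have ha1 : a = 1 := by linarith
      simp [ha1]
    have hH := rho_holder (r := r) hP ha' hb' hab (θ1 := θ1) (θ2 := θ2)
    rw [hLam, hLam, hLam]
    calc Real.log (rhoC (PiMat r (a * θ1 + b * θ2) P))
        ≤ Real.log (rhoC (PiMat r θ1 P) ^ a * rhoC (PiMat r θ2 P) ^ b) :=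
          Real.log_le_log (hrpos _) hH
      _ = a * Real.log (rhoC (PiMat r θ1 P)) + b * Real.log (rhoC (PiMat r θ2 P)) := by
          rw [Real.log_mul (Real.rpow_pos_of_pos (hrpos θ1) a).ne'
            (Real.rpow_pos_of_pos (hrpos θ2) b).ne',
            Real.log_rpow (hrpos θ1), Real.log_rpow (hrpos θ2)]
  · -- nilpotent case
    push_neg at hpos
    have hzero : ∀ θ : ℝ, rhoC (PiMat r θ P) = 0 := by
      intro θ
      by_contra hz
      have hrpos : 0 < rhoC (PiMat r θ P) := lt_of_le_of_ne (rhoC_nonneg _) (Ne.symm hz)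
      obtain ⟨u, hu0, hune, heig, _⟩ := pf_exists hMne (hPi θ)
      obtain ⟨n, hn, k, hk⟩ := exists_cycle (hPi θ) hrpos hu0 hune heig
      set C := Finset.univ.sup' hne fun j => Real.exp (θ * r j) with hC
      obtain ⟨j0, hj0⟩ := hne
      have hCpos : 0 < C := lt_of_lt_of_le (Real.exp_pos (θ * r j0)) (Finset.le_sup' (fun j => Real.exp (θ * r j)) hj0)
      have hub : ∀ i j, PiMat r θ P i j ≤ (C • P) i j := by
        intro i j
        show P i j * Real.exp (θ * r j) ≤ C * P i j
        rw [mul_comm C (P i j)]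
        exact mul_le_mul_of_nonneg_left
          (Finset.le_sup' (fun j => Real.exp (θ * r j)) (Finset.mem_univ j)) (hP i j)
      have hCP0 : ∀ i j, 0 ≤ (C • P) i j := fun i j => mul_nonneg hCpos.le (hP i j)
      have hmono := pow_entry_mono (hPi θ) hCP0 hub n k k
      rw [smul_pow] at hmono
      have hPkk : (P ^ n) k k = 0 := le_antisymm (hpos n hn k) (pow_entry_nonneg hP n k k)
      rw [show ((C ^ n • P ^ n) k k : ℝ) = C ^ n * (P ^ n) k k from rfl, hPkk, mul_zero] at hmono
      exact absurd (lt_of_lt_of_le hk hmono) (lt_irrefl 0)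
    have hfun : (fun θ : ℝ => LambdaA r θ P) = fun _ => (0 : ℝ) := funext fun θ => by
      rw [hLam θ, hzero θ, Real.log_zero]
    rw [hfun]
    exact convexOn_const 0 convex_univ

end
end Stmt7Aux

theorem stmt7 (M : ℕ) (hM : 2 ≤ M) (r : Fin M → ℝ)
    (P : Matrix (Fin M) (Fin M) ℝ) (hP : ∀ i j, 0 ≤ P i j) :
    ConvexOn ℝ Set.univ (fun θ : ℝ => LambdaA r θ P) := by
  exact Stmt7Aux.main hM hP
end
end

section
/- The set I_1 is not convex in general for M = 3: there exist irreducible row-stochastic 3×3 matrices Ξ₁ and Ξ₂, arrival rates r ∈ ℝ³ with nonnegative entries, a service rate c > 0, and α ∈ (0,1), such that m(Ξ₁) < c and m(Ξ₂) < c, the matrix α·Ξ₁ + (1−α)·Ξ₂ is irreducible and row-stochastic, and m(α·Ξ₁ + (1−α)·Ξ₂) > c. (Explicit witnesses: Ξ₁ with rows (0.2,0.6,0.2), (0.6,0.2,0.2), (0.2,0.4,0.4); Ξ₂ with rows (0.7,0.1,0.2), (0.2,0.1,0.7), (0.3,0.6,0.1); r = (0.2, 1.0, 2.5).) -/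
open scoped BigOperators Classical
open Filter

noncomputable section

theorem stmt18 :
    ∃ (Ξ₁ Ξ₂ : Matrix (Fin 3) (Fin 3) ℝ) (r : Fin 3 → ℝ) (c : ℝ) (α : ℝ),
      (∀ j, 0 ≤ r j) ∧ 0 < c ∧ 0 < α ∧ α < 1 ∧
      IsRowStochastic Ξ₁ ∧ IsIrreducibleMat Ξ₁ ∧
      IsRowStochastic Ξ₂ ∧ IsIrreducibleMat Ξ₂ ∧
      (∃ π₁ : Fin 3 → ℝ, IsStationaryDist Ξ₁ π₁ ∧ ∑ i, π₁ i * r i < c) ∧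
      (∃ π₂ : Fin 3 → ℝ, IsStationaryDist Ξ₂ π₂ ∧ ∑ i, π₂ i * r i < c) ∧
      IsRowStochastic (α • Ξ₁ + (1 - α) • Ξ₂) ∧
      IsIrreducibleMat (α • Ξ₁ + (1 - α) • Ξ₂) ∧
      ∃ π : Fin 3 → ℝ, IsStationaryDist (α • Ξ₁ + (1 - α) • Ξ₂) π ∧
        c < ∑ i, π i * r i := by

  refine ⟨!![1/5,3/5,1/5; 3/5,1/5,1/5; 1/5,2/5,2/5],
    !![7/10,1/10,1/5; 1/5,1/10,7/10; 3/10,3/5,1/10],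
    ![1/5,1,5/2], 11/10, 1/2, ?_, by norm_num, by norm_num, by norm_num,
    ?_, ?_, ?_, ?_, ?_, ?_, ?_, ?_, ?_⟩
  · intro j; fin_cases j <;> norm_num
  · constructor
    · intro i j; fin_cases i <;> fin_cases j <;> norm_num
    · intro i; fin_cases i <;> simp [Fin.sum_univ_three] <;> norm_num
  · intro i j
    refine ⟨1, le_refl 1, ?_⟩
    rw [pow_one]
    fin_cases i <;> fin_cases j <;> norm_num
  · constructor
    · intro i j; fin_cases i <;> fin_cases j <;> norm_num
    · intro i; fin_cases i <;> simp [Fin.sum_univ_three] <;> norm_num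
  · intro i j
    refine ⟨1, le_refl 1, ?_⟩
    rw [pow_one]
    fin_cases i <;> fin_cases j <;> norm_num
  · refine ⟨![5/14,11/28,1/4], ⟨?_, ?_, ?_⟩, ?_⟩
    · intro i; fin_cases i <;> norm_num
    · simp [Fin.sum_univ_three]; norm_num
    · intro j; fin_cases j <;> simp [Fin.sum_univ_three] <;> norm_num
    · simp [Fin.sum_univ_three]; norm_num
  · refine ⟨![39/85,21/85,5/17], ⟨?_, ?_, ?_⟩, ?_⟩
    · intro i; fin_cases i <;> norm_num
    · simp [Fin.sum_univ_three]; norm_num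
    · intro j; fin_cases j <;> simp [Fin.sum_univ_three] <;> norm_num
    · simp [Fin.sum_univ_three]; norm_num
  · constructor
    · intro i j; fin_cases i <;> fin_cases j <;>
        simp [Matrix.add_apply, Matrix.smul_apply] <;> norm_num
    · intro i; fin_cases i <;>
        simp [Fin.sum_univ_three, Matrix.add_apply, Matrix.smul_apply] <;> norm_num
  · intro i j
    refine ⟨1, le_refl 1, ?_⟩
    rw [pow_one]
    fin_cases i <;> fin_cases j <;>
      simp [Matrix.add_apply, Matrix.smul_apply] <;> norm_num
  · refine ⟨![55/147,145/441,131/441], ⟨?_, ?_, ?_⟩, ?_⟩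
    · intro i; fin_cases i <;> norm_num
    · simp [Fin.sum_univ_three]; norm_num
    · intro j; fin_cases j <;>
        simp [Fin.sum_univ_three, Matrix.add_apply, Matrix.smul_apply] <;> norm_num
    · simp [Fin.sum_univ_three]; norm_num
end
end
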